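/- arXiv:1611.08140 — 6 statements merged into one kernel-verified Lean document; each statement's English description precedes it below -/
import Mathlib

section
/- Let κ be an uncountable regular cardinal. Then (i) the dominating number 𝔡_κ equals the least cardinality of a family 𝒥 of interval partitions of κ such that every interval partition of κ is dominated (≤*) by some member of 𝒥, and (ii) the unbounding number 𝔟_κ equals the least cardinality of a family 𝒥 of interval partitions of κ such that no single interval partition of κ dominates every member of 𝒥. -/
namespace GenCichon

noncomputable section

open Cardinal Set Ordinal

variable (κ : Cardinal.{0})

/-- The ordinals below `κ`, i.e. the cardinal `κ` viewed as a set of ordinals. -/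
abbrev Idx : Type 1 := ↥(Set.Iio κ.ord)

/-- The generalized Cantor space `2^κ`. -/
abbrev GenCantor : Type 1 := Idx κ → Bool

/-- The generalized Baire space `κ^κ`. -/
abbrev GenBaire : Type 1 := Idx κ → Idx κ

/-- The basic open (cylinder) set `[σ]` determined by the element `σ` of `2^{<κ}`
with domain `[0, δ)` (values of `σ` at or above `δ` are irrelevant). -/
def cyl (δ : Ordinal) (σ : Ordinal → Bool) : Set (GenCantor κ) :=
  { x | ∀ β : Idx κ, β.1 < δ → x β = σ β.1 }

/-- `A ⊆ 2^κ` is nowhere dense: every basic open set `[σ]`, `σ ∈ 2^{<κ}`, has a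
basic open refinement `[σ'] ⊆ [σ]` disjoint from `A`. -/
def IsNwd (A : Set (GenCantor κ)) : Prop :=
  ∀ δ < κ.ord, ∀ σ : Ordinal → Bool, ∃ δ', δ ≤ δ' ∧ δ' < κ.ord ∧
    ∃ σ' : Ordinal → Bool, (∀ β < δ, σ' β = σ β) ∧ cyl κ δ' σ' ∩ A = ∅

/-- `A ⊆ 2^κ` is `κ`-meager: a union of `κ` many nowhere dense sets. -/
def IsKMeager (A : Set (GenCantor κ)) : Prop :=
  ∃ B : Idx κ → Set (GenCantor κ), (∀ i, IsNwd κ (B i)) ∧ A = ⋃ i, B i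

/-- The covering number of the `κ`-meager ideal. -/
def covM : Cardinal.{1} :=
  sInf { c : Cardinal.{1} | ∃ J : Set (Set (GenCantor κ)),
    (∀ A ∈ J, IsKMeager κ A) ∧ ⋃₀ J = Set.univ ∧ c = #J }

/-- The uniformity number of the `κ`-meager ideal. -/
def nonM : Cardinal.{1} :=
  sInf { c : Cardinal.{1} | ∃ X : Set (GenCantor κ), ¬ IsKMeager κ X ∧ c = #X }

/-- The additivity number of the `κ`-meager ideal. -/
def addM : Cardinal.{1} :=
  sInf { c : Cardinal.{1} | ∃ J : Set (Set (GenCantor κ)),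
    (∀ A ∈ J, IsKMeager κ A) ∧ ¬ IsKMeager κ (⋃₀ J) ∧ c = #J }

/-- The cofinality number of the `κ`-meager ideal. -/
def cofM : Cardinal.{1} :=
  sInf { c : Cardinal.{1} | ∃ J : Set (Set (GenCantor κ)),
    (∀ A ∈ J, IsKMeager κ A) ∧ (∀ A, IsKMeager κ A → ∃ B ∈ J, A ⊆ B) ∧ c = #J }

/-- `g` eventually dominates `f` (`f <* g`). -/
def EvDom (f g : GenBaire κ) : Prop :=
  ∃ α : Idx κ, ∀ β : Idx κ, α < β → f β < g β

/-- The unbounding number `𝔟_κ`. -/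
def bK : Cardinal.{1} :=
  sInf { c : Cardinal.{1} | ∃ F : Set (GenBaire κ),
    (∀ g : GenBaire κ, ∃ f ∈ F, ¬ EvDom κ f g) ∧ c = #F }

/-- The dominating number `𝔡_κ`. -/
def dK : Cardinal.{1} :=
  sInf { c : Cardinal.{1} | ∃ F : Set (GenBaire κ),
    (∀ g : GenBaire κ, ∃ f ∈ F, EvDom κ g f) ∧ c = #F }

/-- `f` and `g` are eventually different (`f ≠* g`). -/
def EvDiff (f g : GenBaire κ) : Prop :=
  #{ α : Idx κ | f α = g α } < Cardinal.lift.{1} κ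

/-- `𝔟_κ(≠*)`: least size of a family such that every `g` is cofinally matching
with some member of it. -/
def bNeq : Cardinal.{1} :=
  sInf { c : Cardinal.{1} | ∃ F : Set (GenBaire κ),
    (∀ g : GenBaire κ, ∃ f ∈ F, ¬ EvDiff κ f g) ∧ c = #F }

/-- `𝔡_κ(≠*)`: least size of a family such that every `g` is eventually different
from some member of it. -/
def dNeq : Cardinal.{1} :=
  sInf { c : Cardinal.{1} | ∃ F : Set (GenBaire κ),
    (∀ g : GenBaire κ, ∃ f ∈ F, EvDiff κ f g) ∧ c = #F }

/-- An interval partition of `κ`: a strictly increasing continuous sequence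
`(pts α : α < κ)` of ordinals below `κ` with `pts 0 = 0`; the `α`-th interval is
`[pts α, pts (α+1))`.  (Values at or above `κ` are normalized to `0`, so that an
interval partition is determined by its restriction below `κ`.) -/
structure IntervalPartition where
  pts : Ordinal → Ordinal
  zero : pts 0 = 0
  lt_ord : ∀ α < κ.ord, pts α < κ.ord
  strictMono : ∀ α β : Ordinal, α < β → β < κ.ord → pts α < pts β
  isCont : ∀ δ < κ.ord, Order.IsSuccLimit δ → pts δ = ⨆ β : ↥(Set.Iio δ), pts β.1
  eq_zero_of_le : ∀ α, κ.ord ≤ α → pts α = 0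

/-- The `β`-th interval of `J` is included in the `α`-th interval of `I`. -/
def SubIntv (J : IntervalPartition κ) (β : Ordinal) (I : IntervalPartition κ)
    (α : Ordinal) : Prop :=
  I.pts α ≤ J.pts β ∧ J.pts (β + 1) ≤ I.pts (α + 1)

/-- `I` dominates `J` (`J ≤* I`): from some point on, every interval of `I`
contains an interval of `J`. -/
def IPDom (J I : IntervalPartition κ) : Prop :=
  ∃ γ < κ.ord, ∀ α, γ < α → α < κ.ord → ∃ β < κ.ord, SubIntv κ J β I α

/-- `y` matches the `κ`-chopped function `(x, I)`: `y` and `x` agree on cofinally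
many intervals of `I`. -/
def Matches (y x : GenCantor κ) (I : IntervalPartition κ) : Prop :=
  ∀ γ < κ.ord, ∃ α, γ ≤ α ∧ α < κ.ord ∧
    ∀ β : Idx κ, I.pts α ≤ β.1 → β.1 < I.pts (α + 1) → y β = x β

/-- The set of elements of `2^κ` matching the `κ`-chopped function `(x, I)`. -/
def MatchSet (x : GenCantor κ) (I : IntervalPartition κ) : Set (GenCantor κ) :=
  { y | Matches κ y x I }

/-- `h ∈ κ^κ` tends to `κ`: `lim_{α → κ} h(α) = κ`. -/
def TendsToTop (h : GenBaire κ) : Prop :=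
  ∀ γ : Idx κ, ∃ α : Idx κ, ∀ β : Idx κ, α ≤ β → γ ≤ h β

/-- `φ` is an `h`-slalom: `φ(α)` is a subset of `κ` of cardinality `|h(α)|`. -/
def IsSlalom (h : GenBaire κ) (φ : Idx κ → Set (Idx κ)) : Prop :=
  ∀ α : Idx κ, #(φ α) = Cardinal.lift.{1} (h α).1.card

/-- The (total) slalom `φ` localizes `f` (`f ∈* φ`). -/
def Localizes (φ : Idx κ → Set (Idx κ)) (f : GenBaire κ) : Prop :=
  #{ α : Idx κ | f α ∉ φ α } < Cardinal.lift.{1} κ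

/-- `𝔟_h(∈*)`. -/
def bLoc (h : GenBaire κ) : Cardinal.{1} :=
  sInf { c : Cardinal.{1} | ∃ F : Set (GenBaire κ),
    (∀ φ : Idx κ → Set (Idx κ), IsSlalom κ h φ → ∃ f ∈ F, ¬ Localizes κ φ f) ∧ c = #F }

/-- `𝔡_h(∈*)`. -/
def dLoc (h : GenBaire κ) : Cardinal.{1} :=
  sInf { c : Cardinal.{1} | ∃ Φ : Set (Idx κ → Set (Idx κ)),
    (∀ φ ∈ Φ, IsSlalom κ h φ) ∧ (∀ f : GenBaire κ, ∃ φ ∈ Φ, Localizes κ φ f) ∧ c = #Φ }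

/-- A partial `h`-slalom: a slalom whose domain is a subset of `κ` of cardinality `κ`.
(The values outside the domain are normalized to `∅`.) -/
structure PartialSlalom (h : GenBaire κ) where
  dom : Set (Idx κ)
  dom_card : #dom = Cardinal.lift.{1} κ
  fn : Idx κ → Set (Idx κ)
  fn_card : ∀ α ∈ dom, #(fn α) = Cardinal.lift.{1} (h α).1.card
  eq_empty_of_not_mem : ∀ α ∉ dom, fn α = ∅

/-- The partial slalom `φ` localizes `f` (`f ∈* φ`). -/
def PLocalizes {h : GenBaire κ} (φ : PartialSlalom κ h) (f : GenBaire κ) : Prop :=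
  #{ α : Idx κ | α ∈ φ.dom ∧ f α ∉ φ.fn α } < Cardinal.lift.{1} κ

/-- `𝔟_h(p∈*)`. -/
def bPLoc (h : GenBaire κ) : Cardinal.{1} :=
  sInf { c : Cardinal.{1} | ∃ F : Set (GenBaire κ),
    (∀ φ : PartialSlalom κ h, ∃ f ∈ F, ¬ PLocalizes κ φ f) ∧ c = #F }

/-- `𝔡_h(p∈*)`. -/
def dPLoc (h : GenBaire κ) : Cardinal.{1} :=
  sInf { c : Cardinal.{1} | ∃ Φ : Set (PartialSlalom κ h),
    (∀ f : GenBaire κ, ∃ φ ∈ Φ, PLocalizes κ φ f) ∧ c = #Φ }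

/-- `X ⊆ 2^κ` is open in the `<κ`-box topology. -/
def IsOpenK (X : Set (GenCantor κ)) : Prop :=
  ∀ x ∈ X, ∃ δ < κ.ord, { y : GenCantor κ | ∀ β : Idx κ, β.1 < δ → y β = x β } ⊆ X

/-- `X ⊆ 2^κ` is dense: it meets every basic open set. -/
def IsDenseK (X : Set (GenCantor κ)) : Prop :=
  ∀ δ < κ.ord, ∀ σ : Ordinal → Bool, (cyl κ δ σ ∩ X).Nonempty

/-- Coordinatewise addition modulo 2 on `2^κ`. -/
def addMod2 (x y : GenCantor κ) : GenCantor κ := fun α => Bool.xor (x α) (y α)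

/-- The identification of `σ ∈ 2^{<κ}` (with domain `[0, δ)`) with the element of
`2^κ` extending `σ` by `0`'s. -/
def extendZero (δ : Ordinal) (σ : Ordinal → Bool) : GenCantor κ :=
  fun α => if α.1 < δ then σ α.1 else false

end

end GenCichon

namespace GenCichon

open Cardinal Set Ordinal

section Aux

variable {κ : Cardinal.{0}}

/-- ordinal value of `g` at an arbitrary ordinal (junk `0` outside the domain). -/
noncomputable def gv (κ : Cardinal.{0}) (g : GenBaire κ) : Ordinal.{0} → Ordinal.{0} :=
  fun β => if h : β < κ.ord then (g ⟨β, h⟩ : Idx κ).1 else 0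

lemma gv_eq (g : GenBaire κ) (β : Idx κ) : gv κ g β.1 = (g β).1 := by
  unfold gv; exact dif_pos β.2

lemma gv_lt_ord (hpos : 0 < κ.ord) (g : GenBaire κ) (β : Ordinal) : gv κ g β < κ.ord := by
  unfold gv; split
  · exact (g _).2
  · exact hpos

lemma iSup_Iio_lt_ord {δ c : Ordinal.{0}} (hδ : δ.card < c.cof)
    {f : Ordinal.{0} → Ordinal.{0}} (hf : ∀ β < δ, f β < c) :
    (⨆ β : ↥(Set.Iio δ), f β.1) < c := by
  have hrange : Set.range (fun β : ↥(Set.Iio δ) => f β.1)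
      = Set.range (fun i : δ.ToType => f (((Ordinal.ToType.mk (o := δ))).symm i).1) := by
    ext x
    constructor
    · rintro ⟨β, rfl⟩
      exact ⟨(Ordinal.ToType.mk (o := δ)) β, by simp⟩
    · rintro ⟨i, rfl⟩
      exact ⟨((Ordinal.ToType.mk (o := δ))).symm i, rfl⟩
  have h1 : (⨆ β : ↥(Set.Iio δ), f β.1)
      = ⨆ i : δ.ToType, f (((Ordinal.ToType.mk (o := δ))).symm i).1 := by
    unfold iSup
    rw [hrange]
  rw [h1]
  refine Ordinal.iSup_lt_ord ?_ ?_
  · rwa [Cardinal.mk_toType]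
  · intro i
    exact hf _ (((Ordinal.ToType.mk (o := δ))).symm i).2

namespace IntervalPartition

variable (I : IntervalPartition κ)

lemma pts_mono {ζ ξ : Ordinal} (h : ζ ≤ ξ) (hξ : ξ < κ.ord) : I.pts ζ ≤ I.pts ξ := by
  rcases eq_or_lt_of_le h with rfl | h'
  · exact le_rfl
  · exact (I.strictMono _ _ h' hξ).le

lemma le_pts (hlim : Order.IsSuccLimit κ.ord) : ∀ ξ < κ.ord, ξ ≤ I.pts ξ := by
  intro ξ
  induction ξ using Ordinal.limitRecOn with
  | zero => intro _; exact zero_le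
  | add_one ξ ih =>
    rw [Ordinal.add_one_eq_succ]
    intro h
    have hξ : ξ < κ.ord := (Order.lt_succ ξ).trans h
    have h2 : I.pts ξ < I.pts (Order.succ ξ) := by
      rw [← Ordinal.add_one_eq_succ]
      exact I.strictMono ξ (ξ + 1) (lt_add_one ξ) (by rwa [Ordinal.add_one_eq_succ])
    exact Order.succ_le_iff.2 ((ih hξ).trans_lt h2)
  | limit δ hδ ih =>
    intro h
    rw [I.isCont δ h hδ]
    apply le_of_forall_lt
    intro ζ hζ
    have h1 : Order.succ ζ < δ := hδ.succ_lt hζ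
    have h2 : ζ < I.pts (Order.succ ζ) :=
      (Order.lt_succ ζ).trans_le (ih _ h1 (h1.trans h))
    exact h2.trans_le (Ordinal.le_iSup (fun β : ↥(Set.Iio δ) => I.pts β.1) ⟨Order.succ ζ, h1⟩)

lemma exists_interval (hlim : Order.IsSuccLimit κ.ord) {β : Ordinal} (hβ : β < κ.ord) :
    ∃ ξ, ξ < κ.ord ∧ I.pts ξ ≤ β ∧ β < I.pts (ξ + 1) ∧ ξ ≤ β := by
  set S : Set Ordinal := {ξ | β < I.pts (ξ + 1)} with hS
  have hβS : β ∈ S := by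
    have h1 : β + 1 < κ.ord := by rw [Ordinal.add_one_eq_succ]; exact hlim.succ_lt hβ
    exact (lt_add_one β).trans_le (I.le_pts hlim _ h1)
  set ξ₀ := sInf S with hξ₀
  have hmem : ξ₀ ∈ S := csInf_mem ⟨β, hβS⟩
  have hle : ξ₀ ≤ β := csInf_le' hβS
  have hξord : ξ₀ < κ.ord := hle.trans_lt hβ
  have hnot : ∀ ζ < ξ₀, I.pts (ζ + 1) ≤ β := by
    intro ζ hζ
    by_contra hc
    have hmem' : ζ ∈ S := not_le.1 hc
    exact absurd hζ (not_lt.2 (csInf_le' hmem'))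
  refine ⟨ξ₀, hξord, ?_, hmem, hle⟩
  rcases Ordinal.zero_or_succ_or_isSuccLimit ξ₀ with h0 | ⟨a, ha⟩ | hl
  · rw [h0, I.zero]; exact zero_le
  · have haξ : a < ξ₀ := by rw [← ha]; exact Order.lt_succ a
    have := hnot a haξ
    rwa [Ordinal.add_one_eq_succ, ha] at this
  · rw [I.isCont ξ₀ hξord hl]
    haveI : Nonempty (↥(Set.Iio ξ₀)) := ⟨⟨0, hl.pos⟩⟩
    apply ciSup_le'
    rintro ⟨ζ, hζ⟩
    have h1 : ζ + 1 ≤ ξ₀ := by rw [Ordinal.add_one_eq_succ]; exact Order.succ_le_iff.2 hζ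
    exact (I.pts_mono (le_of_lt (lt_add_one ζ)) (h1.trans_lt hξord)).trans (hnot ζ hζ)

end IntervalPartition

lemma two_add {ξ : Ordinal} : ξ + 2 = (ξ + 1) + 1 := by
  rw [add_assoc]; norm_num

lemma add_two_lt (hlim : Order.IsSuccLimit κ.ord) {ξ : Ordinal} (h : ξ < κ.ord) : ξ + 2 < κ.ord := by
  rw [two_add, Ordinal.add_one_eq_succ, Ordinal.add_one_eq_succ]
  exact hlim.succ_lt (hlim.succ_lt h)

lemma add_one_lt (hlim : Order.IsSuccLimit κ.ord) {ξ : Ordinal} (h : ξ < κ.ord) : ξ + 1 < κ.ord := by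
  rw [Ordinal.add_one_eq_succ]; exact hlim.succ_lt h

/-- Construction A: closure-point interval partition of `g`. -/
lemma exists_cl_partition (hreg : κ.IsRegular) (hunc : Cardinal.aleph0 < κ)
    (g : GenBaire κ) :
    ∃ I : IntervalPartition κ, ∀ ξ < κ.ord, ∀ β < I.pts ξ, gv κ g β < I.pts ξ := by
  have hlim : Order.IsSuccLimit κ.ord := Cardinal.isSuccLimit_ord hreg.aleph0_le
  have hcof : κ.ord.cof = κ := hreg.cof_eq
  have hgv : ∀ β, gv κ g β < κ.ord := gv_lt_ord hlim.pos g
  -- existence of a closure point above any ordinal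
  have next : ∀ γ < κ.ord, ∃ c, γ < c ∧ c < κ.ord ∧ ∀ β < c, gv κ g β < c := by
    intro γ hγ
    set s : ℕ → Ordinal := fun n =>
      Nat.rec (γ + 1) (fun _ p => max (p + 1) (Ordinal.blsub p (fun β _ => gv κ g β))) n with hs
    have hslt : ∀ n, s n < κ.ord := by
      intro n
      induction n with
      | zero => exact add_one_lt hlim hγ
      | succ n ih =>
        refine max_lt (add_one_lt hlim ih) (Ordinal.blsub_lt_ord ?_ fun i _ => hgv i)
        rw [hcof]
        exact Cardinal.lt_ord.1 ih
    refine ⟨⨆ n, s n, ?_, ?_, ?_⟩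
    · have h0 : s 0 = γ + 1 := rfl
      exact (lt_add_one γ).trans_le (h0 ▸ Ordinal.le_iSup s 0)
    · refine Ordinal.iSup_lt_ord ?_ hslt
      rw [Cardinal.mk_nat, hcof]; exact hunc
    · intro β hβ
      obtain ⟨n, hn⟩ := Ordinal.lt_iSup_iff.1 hβ
      have h1 : gv κ g β < Ordinal.blsub (s n) (fun β _ => gv κ g β) :=
        Ordinal.lt_blsub _ β hn
      have h2 : Ordinal.blsub (s n) (fun β _ => gv κ g β) ≤ s (n + 1) := le_max_right _ _
      exact (h1.trans_le h2).trans_le (Ordinal.le_iSup s (n + 1))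
  choose! nxt hnxt1 hnxt2 hnxt3 using next
  set raw : Ordinal → Ordinal := fun ξ =>
    Ordinal.limitRecOn ξ 0 (fun _ ih => nxt ih)
      (fun δ _ ih => ⨆ β : ↥(Set.Iio δ), ih β.1 β.2) with hraw
  have raw0 : raw 0 = 0 := Ordinal.limitRecOn_zero _ _ _
  have rawsucc : ∀ ξ, raw (Order.succ ξ) = nxt (raw ξ) := fun ξ =>
    Ordinal.limitRecOn_succ _ _ _ _
  have rawlim : ∀ δ (h : Order.IsSuccLimit δ), raw δ = ⨆ β : ↥(Set.Iio δ), raw β.1 := fun δ h =>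
    Ordinal.limitRecOn_limit _ _ _ _ h
  have key : ∀ ξ < κ.ord, raw ξ < κ.ord ∧ (∀ β < raw ξ, gv κ g β < raw ξ) ∧
      ∀ ζ < ξ, raw ζ < raw ξ := by
    intro ξ
    induction ξ using Ordinal.limitRecOn with
    | zero =>
      intro _
      refine ⟨by rw [raw0]; exact hlim.pos, ?_, ?_⟩
      · intro β hβ; rw [raw0] at hβ; exact absurd hβ (not_lt.2 (zero_le (a := β)))
      · intro ζ hζ; exact absurd hζ (not_lt.2 (zero_le (a := ζ)))
    | add_one ξ ih =>
      rw [Ordinal.add_one_eq_succ]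
      intro h
      have hξ : ξ < κ.ord := (Order.lt_succ ξ).trans h
      obtain ⟨h1, h2, h3⟩ := ih hξ
      have hstep : raw ξ < raw (Order.succ ξ) := by rw [rawsucc]; exact hnxt1 _ h1
      refine ⟨by rw [rawsucc]; exact hnxt2 _ h1, by rw [rawsucc]; exact hnxt3 _ h1, ?_⟩
      intro ζ hζ
      rcases (Order.lt_succ_iff.1 hζ).eq_or_lt with rfl | h'
      · exact hstep
      · exact (h3 ζ h').trans hstep
    | limit δ hδ ih =>
      intro h
      have hall : ∀ ζ (hζ : ζ < δ), raw ζ < κ.ord := fun ζ hζ => (ih ζ hζ (hζ.trans h)).1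
      have hsup : raw δ = ⨆ β : ↥(Set.Iio δ), raw β.1 := rawlim δ hδ
      refine ⟨?_, ?_, ?_⟩
      · rw [hsup]
        exact iSup_Iio_lt_ord (by rw [hcof]; exact Cardinal.lt_ord.1 h) hall
      · intro β hβ
        rw [hsup] at hβ ⊢
        obtain ⟨⟨ζ, hζ⟩, hβζ⟩ := Ordinal.lt_iSup_iff.1 hβ
        exact ((ih ζ hζ (hζ.trans h)).2.1 β hβζ).trans_le
          (Ordinal.le_iSup (fun β : ↥(Set.Iio δ) => raw β.1) ⟨ζ, hζ⟩)
      · intro ζ hζ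
        have h1 : Order.succ ζ < δ := hδ.succ_lt hζ
        have h2 : raw ζ < raw (Order.succ ζ) :=
          (ih _ h1 (h1.trans h)).2.2 ζ (Order.lt_succ ζ)
        rw [hsup]
        exact h2.trans_le (Ordinal.le_iSup (fun β : ↥(Set.Iio δ) => raw β.1) ⟨Order.succ ζ, h1⟩)
  set p : Ordinal → Ordinal := fun ξ => if h : ξ < κ.ord then raw ξ else 0 with hp
  have hpeq : ∀ {ξ}, ξ < κ.ord → p ξ = raw ξ := fun h => dif_pos h
  have hpeq' : ∀ {ξ}, κ.ord ≤ ξ → p ξ = 0 := fun h => dif_neg (not_lt.2 h)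
  refine ⟨⟨p, ?_, ?_, ?_, ?_, ?_⟩, ?_⟩
  · rw [hpeq hlim.pos, raw0]
  · intro ξ h; rw [hpeq h]; exact (key ξ h).1
  · intro ζ ξ h hξ; rw [hpeq hξ, hpeq (h.trans hξ)]; exact (key ξ hξ).2.2 ζ h
  · intro δ hδ hlimδ
    rw [hpeq hδ, rawlim δ hlimδ]
    exact iSup_congr fun β => (hpeq (β.2.trans hδ)).symm
  · intro ξ h; exact hpeq' h
  · show ∀ ξ < κ.ord, ∀ β < p ξ, gv κ g β < p ξ
    intro ξ h β hβ
    rw [hpeq h] at hβ ⊢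
    exact (key ξ h).2.1 β hβ

/-- Construction B: the function `β ↦ I.pts (ind β + 2)` attached to a partition. -/
lemma exists_fun (hlim : Order.IsSuccLimit κ.ord) (I : IntervalPartition κ) :
    ∃ f : GenBaire κ, ∀ β : Idx κ, ∃ ξ, ξ < κ.ord ∧ I.pts ξ ≤ β.1 ∧ β.1 < I.pts (ξ + 1) ∧
      (f β).1 = I.pts (ξ + 2) := by
  choose ξf h1 h2 h3 h4 using fun β : Idx κ => I.exists_interval hlim β.2
  refine ⟨fun β => ⟨I.pts (ξf β + 2), I.lt_ord _ (add_two_lt hlim (h1 β))⟩,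
    fun β => ⟨ξf β, h1 β, h2 β, h3 β, rfl⟩⟩

/-- From a dominating family of interval partitions to a dominating family of functions. -/
lemma IPfam_to_domfam (hreg : κ.IsRegular) (hunc : Cardinal.aleph0 < κ)
    (𝒥 : Set (IntervalPartition κ))
    (hdom : ∀ I : IntervalPartition κ, ∃ K ∈ 𝒥, IPDom κ I K) :
    ∃ F : Set (GenBaire κ), (∀ g : GenBaire κ, ∃ f ∈ F, EvDom κ g f) ∧ #F ≤ #𝒥 := by
  have hlim : Order.IsSuccLimit κ.ord := Cardinal.isSuccLimit_ord hreg.aleph0_le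
  choose Φ hΦ using fun K : IntervalPartition κ => exists_fun (κ := κ) hlim K
  refine ⟨Φ '' 𝒥, ?_, Cardinal.mk_image_le⟩
  intro g
  obtain ⟨I, hI⟩ := exists_cl_partition hreg hunc g
  obtain ⟨K, hK𝒥, γ, hγ, hKdom⟩ := hdom I
  refine ⟨Φ K, ⟨K, hK𝒥, rfl⟩, ⟨⟨K.pts γ, K.lt_ord γ hγ⟩, ?_⟩⟩
  intro β hβ
  obtain ⟨ξ, hξord, hξ1, hξ2, hξ3⟩ := hΦ K β
  have hβγ : K.pts γ < β.1 := hβ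
  have hγξ : γ < ξ + 1 := by
    by_contra hc
    have h1 : K.pts (ξ + 1) ≤ K.pts γ := K.pts_mono (not_lt.1 hc) hγ
    exact absurd ((hξ2.trans_le h1).trans hβγ) (lt_irrefl _)
  obtain ⟨η, hηord, hsub1, hsub2⟩ := hKdom (ξ + 1) hγξ (add_one_lt hlim hξord)
  have hβI : β.1 < I.pts (η + 1) :=
    hξ2.trans_le (hsub1.trans (I.pts_mono (le_of_lt (lt_add_one η)) (add_one_lt hlim hηord)))
  have hg : (g β).1 < I.pts (η + 1) := by
    have := hI (η + 1) (add_one_lt hlim hηord) β.1 hβI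
    rwa [gv_eq] at this
  show (g β).1 < (Φ K β).1
  rw [hξ3, two_add]
  exact hg.trans_le hsub2

/-- From a dominating family of functions to a dominating family of interval partitions. -/
lemma domfam_to_IPfam (hreg : κ.IsRegular) (hunc : Cardinal.aleph0 < κ)
    (F : Set (GenBaire κ)) (hdom : ∀ g : GenBaire κ, ∃ f ∈ F, EvDom κ g f) :
    ∃ 𝒥 : Set (IntervalPartition κ),
      (∀ I : IntervalPartition κ, ∃ K ∈ 𝒥, IPDom κ I K) ∧ #𝒥 ≤ #F := by
  have hlim : Order.IsSuccLimit κ.ord := Cardinal.isSuccLimit_ord hreg.aleph0_le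
  choose Ψ hΨ using fun g : GenBaire κ => exists_cl_partition hreg hunc g
  refine ⟨Ψ '' F, ?_, Cardinal.mk_image_le⟩
  intro I
  obtain ⟨g, hg⟩ := exists_fun (κ := κ) hlim I
  obtain ⟨f, hfF, α₀, hα₀⟩ := hdom g
  refine ⟨Ψ f, ⟨f, hfF, rfl⟩, α₀.1, α₀.2, ?_⟩
  intro α hγα hαord
  have hb : (Ψ f).pts α < κ.ord := (Ψ f).lt_ord α hαord
  have hα₀b : α₀ < (⟨(Ψ f).pts α, hb⟩ : Idx κ) :=
    show α₀.1 < (Ψ f).pts α from lt_of_lt_of_le hγα ((Ψ f).le_pts hlim α hαord)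
  have hgf : g ⟨(Ψ f).pts α, hb⟩ < f ⟨(Ψ f).pts α, hb⟩ := hα₀ _ hα₀b
  obtain ⟨ξ, hξord, hξ1, hξ2, hξ3⟩ := hg ⟨(Ψ f).pts α, hb⟩
  have hbnext : (Ψ f).pts α < (Ψ f).pts (α + 1) :=
    (Ψ f).strictMono α (α + 1) (lt_add_one α) (add_one_lt hlim hαord)
  have hfb : (f ⟨(Ψ f).pts α, hb⟩).1 < (Ψ f).pts (α + 1) := by
    have := hΨ f (α + 1) (add_one_lt hlim hαord) ((Ψ f).pts α) hbnext
    rwa [gv_eq f ⟨(Ψ f).pts α, hb⟩] at this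
  refine ⟨ξ + 1, add_one_lt hlim hξord, hξ2.le, ?_⟩
  rw [← two_add, ← hξ3]
  exact le_of_lt ((show (g ⟨(Ψ f).pts α, hb⟩).1 < (f ⟨(Ψ f).pts α, hb⟩).1 from hgf).trans hfb)

/-- From an unbounded family of interval partitions to an unbounded family of functions. -/
lemma IPunb_to_unb (hreg : κ.IsRegular) (hunc : Cardinal.aleph0 < κ)
    (𝒥 : Set (IntervalPartition κ))
    (hunbd : ¬ ∃ I : IntervalPartition κ, ∀ K ∈ 𝒥, IPDom κ K I) :
    ∃ F : Set (GenBaire κ), (∀ g : GenBaire κ, ∃ f ∈ F, ¬ EvDom κ f g) ∧ #F ≤ #𝒥 := by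
  have hlim : Order.IsSuccLimit κ.ord := Cardinal.isSuccLimit_ord hreg.aleph0_le
  choose Φ hΦ using fun K : IntervalPartition κ => exists_fun (κ := κ) hlim K
  refine ⟨Φ '' 𝒥, ?_, Cardinal.mk_image_le⟩
  intro g
  by_contra hc
  push_neg at hc
  apply hunbd
  obtain ⟨I, hI⟩ := exists_cl_partition hreg hunc g
  refine ⟨I, fun K hK => ?_⟩
  obtain ⟨α₀, hα₀⟩ := hc (Φ K) ⟨K, hK, rfl⟩
  refine ⟨α₀.1, α₀.2, ?_⟩
  intro ξ hγξ hξord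
  have hb : I.pts ξ < κ.ord := I.lt_ord ξ hξord
  have hα₀b : α₀ < (⟨I.pts ξ, hb⟩ : Idx κ) :=
    show α₀.1 < I.pts ξ from lt_of_lt_of_le hγξ (I.le_pts hlim ξ hξord)
  have hfg : Φ K ⟨I.pts ξ, hb⟩ < g ⟨I.pts ξ, hb⟩ := hα₀ _ hα₀b
  obtain ⟨ζ, hζord, hζ1, hζ2, hζ3⟩ := hΦ K ⟨I.pts ξ, hb⟩
  have hbnext : I.pts ξ < I.pts (ξ + 1) :=
    I.strictMono ξ (ξ + 1) (lt_add_one ξ) (add_one_lt hlim hξord)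
  have hgb : (g ⟨I.pts ξ, hb⟩).1 < I.pts (ξ + 1) := by
    have := hI (ξ + 1) (add_one_lt hlim hξord) (I.pts ξ) hbnext
    rwa [gv_eq g ⟨I.pts ξ, hb⟩] at this
  refine ⟨ζ + 1, add_one_lt hlim hζord, hζ2.le, ?_⟩
  rw [← two_add, ← hζ3]
  exact le_of_lt ((show (Φ K ⟨I.pts ξ, hb⟩).1 < (g ⟨I.pts ξ, hb⟩).1 from hfg).trans hgb)

/-- From an unbounded family of functions to an unbounded family of interval partitions. -/
lemma unb_to_IPunb (hreg : κ.IsRegular) (hunc : Cardinal.aleph0 < κ)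
    (F : Set (GenBaire κ)) (hunbd : ∀ g : GenBaire κ, ∃ f ∈ F, ¬ EvDom κ f g) :
    ∃ 𝒥 : Set (IntervalPartition κ),
      (¬ ∃ I : IntervalPartition κ, ∀ K ∈ 𝒥, IPDom κ K I) ∧ #𝒥 ≤ #F := by
  have hlim : Order.IsSuccLimit κ.ord := Cardinal.isSuccLimit_ord hreg.aleph0_le
  choose Ψ hΨ using fun g : GenBaire κ => exists_cl_partition hreg hunc g
  refine ⟨Ψ '' F, ?_, Cardinal.mk_image_le⟩
  rintro ⟨I, hIdom⟩
  obtain ⟨g, hg⟩ := exists_fun (κ := κ) hlim I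
  obtain ⟨f, hfF, hnd⟩ := hunbd g
  apply hnd
  obtain ⟨γ, hγ, hdom⟩ := hIdom (Ψ f) ⟨f, hfF, rfl⟩
  refine ⟨⟨I.pts (γ + 1), I.lt_ord _ (add_one_lt hlim hγ)⟩, ?_⟩
  intro β hβ
  obtain ⟨ξ, hξord, hξ1, hξ2, hξ3⟩ := hg β
  have hβ1 : I.pts (γ + 1) < β.1 := hβ
  have hγξ : γ < ξ + 1 := by
    by_contra hcc
    have h2 : I.pts (ξ + 1) ≤ I.pts (γ + 1) :=
      I.pts_mono ((not_lt.1 hcc).trans (le_of_lt (lt_add_one γ))) (add_one_lt hlim hγ)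
    exact absurd ((hξ2.trans_le h2).trans hβ1) (lt_irrefl _)
  obtain ⟨η, hηord, hsub1, hsub2⟩ := hdom (ξ + 1) hγξ (add_one_lt hlim hξord)
  have hβK : β.1 < (Ψ f).pts (η + 1) :=
    hξ2.trans_le (hsub1.trans ((Ψ f).pts_mono (le_of_lt (lt_add_one η)) (add_one_lt hlim hηord)))
  have hfβ : (f β).1 < (Ψ f).pts (η + 1) := by
    have := hΨ f (η + 1) (add_one_lt hlim hηord) β.1 hβK
    rwa [gv_eq] at this
  show (f β).1 < (g β).1
  rw [hξ3, two_add]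
  exact hfβ.trans_le hsub2

end Aux

theorem dominating_unbounding_via_interval_partitions (κ : Cardinal.{0})
    (hreg : κ.IsRegular) (hunc : Cardinal.aleph0 < κ) :
    dK κ = sInf { c : Cardinal.{1} | ∃ 𝒥 : Set (IntervalPartition κ),
        (∀ I : IntervalPartition κ, ∃ K ∈ 𝒥, IPDom κ I K) ∧ c = #𝒥 } ∧
    bK κ = sInf { c : Cardinal.{1} | ∃ 𝒥 : Set (IntervalPartition κ),
        (¬ ∃ I : IntervalPartition κ, ∀ K ∈ 𝒥, IPDom κ K I) ∧ c = #𝒥 } := by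
  have hlim : Order.IsSuccLimit κ.ord := Cardinal.isSuccLimit_ord hreg.aleph0_le
  have hdomuniv : ∀ g : GenBaire κ, ∃ f ∈ (Set.univ : Set (GenBaire κ)), EvDom κ g f := by
    intro g
    refine ⟨fun β => ⟨(g β).1 + 1, add_one_lt hlim (g β).2⟩, Set.mem_univ _,
      ⟨0, hlim.pos⟩, fun β _ => ?_⟩
    exact show (g β).1 < (g β).1 + 1 from lt_add_one _
  have hunbuniv : ∀ g : GenBaire κ, ∃ f ∈ (Set.univ : Set (GenBaire κ)), ¬ EvDom κ f g := by
    intro g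
    refine ⟨fun β => ⟨(g β).1 + 1, add_one_lt hlim (g β).2⟩, Set.mem_univ _, ?_⟩
    rintro ⟨α, hα⟩
    have hβ : α < (⟨α.1 + 1, add_one_lt hlim α.2⟩ : Idx κ) :=
      show α.1 < α.1 + 1 from lt_add_one _
    have h1 := hα _ hβ
    have h2 : (g ⟨α.1 + 1, add_one_lt hlim α.2⟩).1 + 1 < (g ⟨α.1 + 1, add_one_lt hlim α.2⟩).1 := h1
    exact absurd h2 (not_lt.2 (le_of_lt (lt_add_one _)))
  constructor
  · apply le_antisymm
    · refine le_csInf ⟨#(Set.univ : Set (IntervalPartition κ)), Set.univ,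
        fun I => ⟨I, Set.mem_univ I, 0, hlim.pos, fun α _ hα => ⟨α, hα, le_rfl, le_rfl⟩⟩, rfl⟩ ?_
      rintro c ⟨𝒥, h𝒥, rfl⟩
      obtain ⟨F, hF, hle⟩ := IPfam_to_domfam hreg hunc 𝒥 h𝒥
      exact le_trans (csInf_le' ⟨F, hF, rfl⟩) hle
    · refine le_csInf ⟨#(Set.univ : Set (GenBaire κ)), Set.univ, hdomuniv, rfl⟩ ?_
      rintro c ⟨F, hF, rfl⟩
      obtain ⟨𝒥, h𝒥, hle⟩ := domfam_to_IPfam hreg hunc F hF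
      exact le_trans (csInf_le' ⟨𝒥, h𝒥, rfl⟩) hle
  · apply le_antisymm
    · obtain ⟨𝒥₀, h𝒥₀, _⟩ := unb_to_IPunb hreg hunc Set.univ hunbuniv
      refine le_csInf ⟨#𝒥₀, 𝒥₀, h𝒥₀, rfl⟩ ?_
      rintro c ⟨𝒥, h𝒥, rfl⟩
      obtain ⟨F, hF, hle⟩ := IPunb_to_unb hreg hunc 𝒥 h𝒥
      exact le_trans (csInf_le' ⟨F, hF, rfl⟩) hle
    · refine le_csInf ⟨#(Set.univ : Set (GenBaire κ)), Set.univ, hunbuniv, rfl⟩ ?_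
      rintro c ⟨F, hF, rfl⟩
      obtain ⟨𝒥, h𝒥, hle⟩ := unb_to_IPunb hreg hunc F hF
      exact le_trans (csInf_le' ⟨𝒥, h𝒥, rfl⟩) hle

end GenCichon
end

section
/- Let κ be an uncountable regular cardinal. Every combinatorially meager subset of 2^κ is κ-meager: if M ⊆ 2^κ and there is a κ-chopped function (x, I) such that no member of M matches (x, I), then M is κ-meager. -/
namespace GenCichon

open Cardinal Set Ordinal

theorem combinatorially_meager_is_meager (κ : Cardinal.{0})
    (hreg : κ.IsRegular) (hunc : Cardinal.aleph0 < κ)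
    (M : Set (GenCantor κ)) (x : GenCantor κ) (I : IntervalPartition κ)
    (h : ∀ y ∈ M, ¬ Matches κ y x I) :
    IsKMeager κ M := by
  have hord : Order.IsSuccLimit κ.ord := Cardinal.isSuccLimit_ord hunc.le
  -- a strictly increasing ordinal function satisfies α ≤ pts α below κ.ord
  have hpts : ∀ α < κ.ord, α ≤ I.pts α := by
    intro α
    induction α using Ordinal.induction with
    | _ α IH =>
      intro hα
      by_contra hlt
      push_neg at hlt
      have h1 : I.pts α ≤ I.pts (I.pts α) := IH (I.pts α) hlt (hlt.trans hα)
      have h2 : I.pts (I.pts α) < I.pts α := I.strictMono _ _ hlt hα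
      exact absurd h1 h2.not_ge
  refine ⟨fun γ => { y | ∀ α, γ.1 ≤ α → α < κ.ord →
      ∃ β : Idx κ, I.pts α ≤ β.1 ∧ β.1 < I.pts (α + 1) ∧ y β ≠ x β } ∩ M, ?_, ?_⟩
  · intro γ δ hδ σ
    set α := max γ.1 δ with hαdef
    have hα : α < κ.ord := max_lt γ.2 hδ
    have hα1 : α + 1 < κ.ord := by
      rw [Ordinal.add_one_eq_succ]
      exact hord.succ_lt hα
    have hδα : δ ≤ I.pts α := le_trans (le_max_right _ _) (hpts α hα)
    refine ⟨I.pts (α + 1), ?_, I.lt_ord _ hα1,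
      fun β => if β < δ then σ β else if hb : β < κ.ord then x ⟨β, hb⟩ else false,
      ?_, ?_⟩
    · exact le_of_lt (lt_of_le_of_lt hδα (I.strictMono _ _ (lt_add_one α) hα1))
    · intro β hβ
      simp [hβ]
    · ext y
      simp only [Set.mem_inter_iff, Set.mem_empty_iff_false, iff_false, not_and]
      intro hy hN
      obtain ⟨β, hβ1, hβ2, hne⟩ := hN α (le_max_left _ _) hα
      intro _
      apply hne
      have hcyl := hy β hβ2
      rw [hcyl]
      have hnd : ¬ β.1 < δ := not_lt.mpr (hδα.trans hβ1)
      simp only []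
      rw [if_neg hnd]
      exact dif_pos β.2
  · ext y
    simp only [Set.mem_iUnion, Set.mem_inter_iff, Set.mem_setOf_eq]
    constructor
    · intro hyM
      have hnm := h y hyM
      rw [Matches] at hnm
      push_neg at hnm
      obtain ⟨γ, hγ, hγ2⟩ := hnm
      exact ⟨⟨γ, hγ⟩, fun α h1 h2 => hγ2 α h1 h2, hyM⟩
    · rintro ⟨γ, _, hyM⟩
      exact hyM

end GenCichon
end

section
/- Assume κ is strongly inaccessible. Then every κ-meager subset of 2^κ is combinatorially meager: for every κ-meager A ⊆ 2^κ there is a κ-chopped function (x, I) such that no member of A matches (x, I). -/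
namespace GenCichon

open Cardinal Set Ordinal


/-! ### Auxiliary machinery -/

private lemma sSup_lt_ord' {κ : Cardinal.{0}} (hreg : κ.IsRegular) {S : Set Ordinal.{0}}
    (hcard : #S < Cardinal.lift.{1} κ) (hbdd : ∀ x ∈ S, x < κ.ord) : sSup S < κ.ord := by
  have hsub : S ⊆ Iio κ.ord := fun x hx => hbdd x hx
  have hsmall : Small.{0} S := small_subset hsub
  have hlift : Cardinal.lift.{1} #(Shrink.{0} S) = Cardinal.lift.{0} #S :=
    Cardinal.lift_mk_eq'.2 ⟨(equivShrink S).symm⟩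
  have hι : #(Shrink.{0} S) < κ := by
    have := hlift.trans (Cardinal.lift_id' #S)
    rwa [← Cardinal.lift_lt.{0, 1}, this]
  have h2 : ∀ i : Shrink.{0} S, ((equivShrink S).symm i : Ordinal) < κ.ord :=
    fun i => hbdd _ ((equivShrink S).symm i).2
  have h3 := Cardinal.iSup_lt_ord_of_isRegular hreg hι h2
  have h4 : ⨆ i : Shrink.{0} S, ((equivShrink S).symm i : Ordinal) = sSup S := by
    show sSup _ = sSup S
    congr 1
    ext ζ
    constructor
    · rintro ⟨i, rfl⟩; exact ((equivShrink S).symm i).2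
    · intro hζ; exact ⟨equivShrink S ⟨ζ, hζ⟩, by simp⟩
  rwa [h4] at h3

section SegRec

open scoped Classical

variable {ι : Type} [LinearOrder ι] [WellFoundedLT ι]

private noncomputable def segTau (g : ι → Ordinal.{0} × (Ordinal.{0} → Bool)) (p : ι)
    (ζ : Ordinal.{0}) : Bool :=
  if h : {q | q < p ∧ ζ < (g q).1}.Nonempty then
    (g ((wellFounded_lt (α := ι)).min _ h)).2 ζ
  else false

private noncomputable def segX (g : ι → Ordinal.{0} × (Ordinal.{0} → Bool))
    (ζ : Ordinal.{0}) : Bool :=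
  if h : {q | ζ < (g q).1}.Nonempty then
    (g ((wellFounded_lt (α := ι)).min _ h)).2 ζ
  else false

private noncomputable def segSt (δ₀ : Ordinal.{0}) (g : ι → Ordinal.{0} × (Ordinal.{0} → Bool))
    (p : ι) : Ordinal.{0} :=
  δ₀ ⊔ sSup ((fun q => (g q).1) '' Set.Iio p)

private noncomputable def segF (δ₀ : Ordinal.{0})
    (step : ι → Ordinal.{0} → (Ordinal.{0} → Bool) → Ordinal.{0} × (Ordinal.{0} → Bool)) :
    ι → Ordinal.{0} × (Ordinal.{0} → Bool) :=
  (wellFounded_lt (α := ι)).fix (fun p IH =>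
    step p (segSt δ₀ (fun q => if hq : q < p then IH q hq else (0, fun _ => false)) p)
      (segTau (fun q => if hq : q < p then IH q hq else (0, fun _ => false)) p))

private lemma segSt_congr {δ₀ : Ordinal.{0}} {g g' : ι → Ordinal.{0} × (Ordinal.{0} → Bool)}
    {p : ι} (hg : ∀ q < p, g q = g' q) : segSt δ₀ g p = segSt δ₀ g' p := by
  unfold segSt
  have : (fun q => (g q).1) '' Set.Iio p = (fun q => (g' q).1) '' Set.Iio p :=
    Set.image_congr fun q hq => by rw [hg q hq]
  rw [this]

private lemma segTau_congr {g g' : ι → Ordinal.{0} × (Ordinal.{0} → Bool)}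
    {p : ι} (hg : ∀ q < p, g q = g' q) : segTau g p = segTau g' p := by
  funext ζ
  have hset : {q | q < p ∧ ζ < (g q).1} = {q | q < p ∧ ζ < (g' q).1} := by
    ext q
    simp only [Set.mem_setOf_eq]
    constructor
    · rintro ⟨h1, h2⟩; exact ⟨h1, by rwa [← hg q h1]⟩
    · rintro ⟨h1, h2⟩; exact ⟨h1, by rwa [hg q h1]⟩
  unfold segTau
  rw [hset]
  by_cases h : {q | q < p ∧ ζ < (g' q).1}.Nonempty
  · rw [dif_pos h, dif_pos h,
      hg _ (((wellFounded_lt (α := ι)).min_mem _ h).1)]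
  · rw [dif_neg h, dif_neg h]

private lemma segF_eq (δ₀ : Ordinal.{0})
    (step : ι → Ordinal.{0} → (Ordinal.{0} → Bool) → Ordinal.{0} × (Ordinal.{0} → Bool))
    (p : ι) :
    segF δ₀ step p =
      step p (segSt δ₀ (segF δ₀ step) p) (segTau (segF δ₀ step) p) := by
  have hg : ∀ q < p, (fun q => if hq : q < p then segF δ₀ step q else
      ((0 : Ordinal.{0}), fun _ => false)) q = segF δ₀ step q := fun q hq => dif_pos hq
  have h0 : segF δ₀ step p =
      step p
        (segSt δ₀ (fun q => if hq : q < p then segF δ₀ step q else (0, fun _ => false)) p)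
        (segTau (fun q => if hq : q < p then segF δ₀ step q else (0, fun _ => false)) p) :=
    WellFounded.fix_eq _ _ p
  rw [h0, segSt_congr hg, segTau_congr hg]

variable {κ : Cardinal.{0}} {δ₀ : Ordinal.{0}}
  {step : ι → Ordinal.{0} → (Ordinal.{0} → Bool) → Ordinal.{0} × (Ordinal.{0} → Bool)}

private lemma seg_lt (hreg : κ.IsRegular) (hseg : ∀ p : ι, #(Set.Iio p) < κ)
    (hδ₀ : δ₀ < κ.ord)
    (hstep : ∀ p st τ, st < κ.ord → st ≤ (step p st τ).1 ∧ (step p st τ).1 < κ.ord) :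
    ∀ p : ι, segSt δ₀ (segF δ₀ step) p < κ.ord ∧
      segSt δ₀ (segF δ₀ step) p ≤ (segF δ₀ step p).1 ∧ (segF δ₀ step p).1 < κ.ord := by
  intro p
  induction p using WellFoundedLT.induction with
  | ind p IH =>
    have hst : segSt δ₀ (segF δ₀ step) p < κ.ord := by
      have h1 : sSup ((fun q => (segF δ₀ step q).1) '' Set.Iio p) < κ.ord := by
        apply sSup_lt_ord' hreg
        · calc #((fun q => (segF δ₀ step q).1) '' Set.Iio p)
              ≤ Cardinal.lift.{1} #(Set.Iio p) := by
                have h := Cardinal.mk_image_le_lift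
                  (f := fun q => (segF δ₀ step q).1) (s := Set.Iio p)
                rwa [Cardinal.lift_id'] at h
            _ < Cardinal.lift.{1} κ := Cardinal.lift_lt.2 (hseg p)
        · rintro x ⟨q, hq, rfl⟩
          exact (IH q hq).2.2
      exact max_lt hδ₀ h1
    exact ⟨hst, by rw [segF_eq]; exact (hstep _ _ _ hst).1,
      by rw [segF_eq]; exact (hstep _ _ _ hst).2⟩

private lemma seg_le {δ₀ : Ordinal.{0}} {g : ι → Ordinal.{0} × (Ordinal.{0} → Bool)} {p : ι} :
    δ₀ ≤ segSt δ₀ g p := le_sup_left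

private lemma seg_mono {q p : ι} (hqp : q < p) :
    (segF δ₀ step q).1 ≤ segSt δ₀ (segF δ₀ step) p := by
  refine le_trans (le_csSup Ordinal.bddAbove_of_small ?_) le_sup_right
  exact Set.mem_image_of_mem _ hqp

private lemma seg_coh (p : ι) (ζ : Ordinal.{0}) (h1 : δ₀ ≤ ζ)
    (h2 : ζ < segSt δ₀ (segF δ₀ step) p) :
    segTau (segF δ₀ step) p ζ = segX (segF δ₀ step) ζ := by
  have hex : ∃ q, q < p ∧ ζ < (segF δ₀ step q).1 := by
    by_contra hcon
    push_neg at hcon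
    have hb : sSup ((fun q => (segF δ₀ step q).1) '' Set.Iio p) ≤ ζ := by
      rcases Set.eq_empty_or_nonempty ((fun q => (segF δ₀ step q).1) '' Set.Iio p) with he | hne
      · rw [he, csSup_empty]; exact zero_le
      · exact csSup_le hne (by rintro x ⟨q, hq, rfl⟩; exact hcon q hq)
    exact absurd h2 (not_lt.2 (sup_le h1 hb))
  obtain ⟨q₀, hq₀p, hq₀ζ⟩ := hex
  have hloc : {q | q < p ∧ ζ < (segF δ₀ step q).1}.Nonempty := ⟨q₀, hq₀p, hq₀ζ⟩
  have hglob : {q | ζ < (segF δ₀ step q).1}.Nonempty := ⟨q₀, hq₀ζ⟩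
  have hmg_mem : ζ < (segF δ₀ step ((wellFounded_lt (α := ι)).min _ hglob)).1 :=
    (wellFounded_lt (α := ι)).min_mem _ hglob
  have hmg_lt : (wellFounded_lt (α := ι)).min _ hglob < p := by
    have h3 := (wellFounded_lt (α := ι)).not_lt_min {q | ζ < (segF δ₀ step q).1} hq₀ζ
    exact lt_of_le_of_lt (not_lt.1 h3) hq₀p
  have hml_mem := (wellFounded_lt (α := ι)).min_mem _ hloc
  have ha : ¬ (wellFounded_lt (α := ι)).min _ hglob < (wellFounded_lt (α := ι)).min _ hloc :=
    (wellFounded_lt (α := ι)).not_lt_min {q | q < p ∧ ζ < (segF δ₀ step q).1} ⟨hmg_lt, hmg_mem⟩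
  have hb : ¬ (wellFounded_lt (α := ι)).min _ hloc < (wellFounded_lt (α := ι)).min _ hglob :=
    (wellFounded_lt (α := ι)).not_lt_min _ hml_mem.2
  have heq : (wellFounded_lt (α := ι)).min _ hloc = (wellFounded_lt (α := ι)).min _ hglob :=
    le_antisymm (not_lt.1 ha) (not_lt.1 hb)
  unfold segTau segX
  rw [dif_pos hloc, dif_pos hglob, heq]

private lemma seg_main
    (hread : ∀ p st τ τ', (∀ ζ, δ₀ ≤ ζ → ζ < st → τ ζ = τ' ζ) → step p st τ = step p st τ')
    (p : ι) :
    segF δ₀ step p = step p (segSt δ₀ (segF δ₀ step) p) (segX (segF δ₀ step)) := by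
  rw [segF_eq]
  exact hread _ _ _ _ (fun ζ hζ1 hζ2 => seg_coh p ζ hζ1 hζ2)

private lemma seg_x (p : ι) (ζ : Ordinal.{0}) (h1 : segSt δ₀ (segF δ₀ step) p ≤ ζ)
    (h2 : ζ < (segF δ₀ step p).1) :
    segX (segF δ₀ step) ζ = (segF δ₀ step p).2 ζ := by
  have hglob : {q | ζ < (segF δ₀ step q).1}.Nonempty := ⟨p, h2⟩
  have hne : ¬ p < (wellFounded_lt (α := ι)).min _ hglob :=
    (wellFounded_lt (α := ι)).not_lt_min _ h2
  have hmem : ζ < (segF δ₀ step ((wellFounded_lt (α := ι)).min _ hglob)).1 :=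
    (wellFounded_lt (α := ι)).min_mem _ hglob
  have heq : (wellFounded_lt (α := ι)).min _ hglob = p := by
    rcases lt_or_eq_of_le (not_lt.1 hne) with hlt | he
    · exact absurd hmem (not_lt.2 (le_trans (seg_mono hlt) h1))
    · exact he
  unfold segX
  rw [dif_pos hglob, heq]

end SegRec


section BlockStep

variable {κ : Cardinal.{0}} {ι : Type}

private noncomputable def blockCore (B : Idx κ → Set (GenCantor κ))
    (hB : ∀ i, IsNwd κ (B i)) (i : Idx κ) (st : Ordinal.{0}) (u : Ordinal.{0} → Bool) :
    Ordinal.{0} × (Ordinal.{0} → Bool) :=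
  if h : st < κ.ord then
    ((hB i st h u).choose, (hB i st h u).choose_spec.2.2.choose)
  else (0, fun _ => false)

private noncomputable def blockU {γ : Ordinal.{0}} (δ : Ordinal.{0})
    (e : ι → ((↥(Set.Iio δ) → Bool) × ↥(Set.Iio γ)))
    (p : ι) (st : Ordinal.{0}) (τ : Ordinal.{0} → Bool) : Ordinal.{0} → Bool :=
  fun ζ => if hζ : ζ < δ then (e p).1 ⟨ζ, hζ⟩ else if ζ < st then τ ζ else false

private noncomputable def blockStep (B : Idx κ → Set (GenCantor κ))
    (hB : ∀ i, IsNwd κ (B i)) (δ : Ordinal.{0}) {γ : Ordinal.{0}} (hγ : γ < κ.ord)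
    (e : ι → ((↥(Set.Iio δ) → Bool) × ↥(Set.Iio γ)))
    (p : ι) (st : Ordinal.{0}) (τ : Ordinal.{0} → Bool) :
    Ordinal.{0} × (Ordinal.{0} → Bool) :=
  blockCore B hB ⟨(e p).2.1, lt_trans (e p).2.2 hγ⟩ st (blockU δ e p st τ)

private lemma blockStep_spec (B : Idx κ → Set (GenCantor κ))
    (hB : ∀ i, IsNwd κ (B i)) (δ : Ordinal.{0}) {γ : Ordinal.{0}} (hγ : γ < κ.ord)
    (e : ι → ((↥(Set.Iio δ) → Bool) × ↥(Set.Iio γ)))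
    (p : ι) (st : Ordinal.{0}) (τ : Ordinal.{0} → Bool)
    (h : st < κ.ord) :
    st ≤ (blockStep B hB δ hγ e p st τ).1 ∧ (blockStep B hB δ hγ e p st τ).1 < κ.ord ∧
    (∀ ζ < st, (blockStep B hB δ hγ e p st τ).2 ζ = blockU δ e p st τ ζ) ∧
    cyl κ (blockStep B hB δ hγ e p st τ).1 (blockStep B hB δ hγ e p st τ).2 ∩
      B ⟨(e p).2.1, lt_trans (e p).2.2 hγ⟩ = ∅ := by
  unfold blockStep blockCore
  rw [dif_pos h]
  have hspec := (hB ⟨(e p).2.1, lt_trans (e p).2.2 hγ⟩ st h (blockU δ e p st τ)).choose_spec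
  exact ⟨hspec.1, hspec.2.1, hspec.2.2.choose_spec.1, hspec.2.2.choose_spec.2⟩

private lemma blockStep_read (B : Idx κ → Set (GenCantor κ))
    (hB : ∀ i, IsNwd κ (B i)) (δ : Ordinal.{0}) {γ : Ordinal.{0}} (hγ : γ < κ.ord)
    (e : ι → ((↥(Set.Iio δ) → Bool) × ↥(Set.Iio γ)))
    (p : ι) (st : Ordinal.{0}) (τ τ' : Ordinal.{0} → Bool)
    (hττ' : ∀ ζ, δ ≤ ζ → ζ < st → τ ζ = τ' ζ) :
    blockStep B hB δ hγ e p st τ = blockStep B hB δ hγ e p st τ' := by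
  have hu : blockU δ e p st τ = blockU δ e p st τ' := by
    funext ζ
    unfold blockU
    by_cases h1 : ζ < δ
    · rw [dif_pos h1, dif_pos h1]
    · rw [dif_neg h1, dif_neg h1]
      by_cases h2 : ζ < st
      · rw [if_pos h2, if_pos h2, hττ' ζ (not_lt.1 h1) h2]
      · rw [if_neg h2, if_neg h2]
  unfold blockStep
  rw [hu]

end BlockStep

private lemma block {κ : Cardinal.{0}} (hinacc : κ.IsInaccessible)
    (B : Idx κ → Set (GenCantor κ)) (hB : ∀ i, IsNwd κ (B i))
    (δ γ : Ordinal.{0}) (hδ : δ < κ.ord) (hγ : γ < κ.ord) :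
    ∃ δ', δ < δ' ∧ δ' < κ.ord ∧ ∃ τ : Ordinal → Bool,
      ∀ s : Ordinal → Bool, ∀ β : Idx κ, β.1 < γ →
        cyl κ δ' (fun ζ => if ζ < δ then s ζ else τ ζ) ∩ B β = ∅ := by
  obtain ⟨haleph, hreg, hsl⟩ := (⟨hinacc.aleph0_lt, hinacc.isRegular, hinacc.isStrongLimit⟩ : _ ∧ _ ∧ _)
  have hlim : Order.IsSuccLimit κ.ord := Cardinal.isSuccLimit_ord haleph.le
  have hsucc : δ + 1 < κ.ord := by
    rw [Ordinal.add_one_eq_succ]; exact hlim.succ_lt hδ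
  rcases eq_or_ne γ 0 with rfl | hγ0
  · exact ⟨δ + 1, by rw [Ordinal.add_one_eq_succ]; exact Order.lt_succ δ, hsucc, fun _ => false,
      fun s β hβ => absurd hβ not_lt_zero⟩
  have hγpos : (0 : Ordinal) < γ := pos_iff_ne_zero.2 hγ0
  have hcard₁ : #((↥(Set.Iio δ) → Bool) × ↥(Set.Iio γ)) < Cardinal.lift.{1} κ := by
    have h1 : #(↥(Set.Iio δ) → Bool) = Cardinal.lift.{1} (2 ^ δ.card) := by
      rw [Cardinal.mk_arrow, Cardinal.mk_bool, Cardinal.lift_two, Cardinal.lift_id',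
        Ordinal.mk_Iio_ordinal, Cardinal.lift_power, Cardinal.lift_two]
    have h2 : #(↥(Set.Iio γ)) = Cardinal.lift.{1} γ.card := Ordinal.mk_Iio_ordinal γ
    rw [Cardinal.mk_prod, Cardinal.lift_id, Cardinal.lift_id, h1, h2, ← Cardinal.lift_mul,
      Cardinal.lift_lt]
    exact Cardinal.mul_lt_of_lt hreg.aleph0_le (hsl.two_power_lt (Cardinal.lt_ord.1 hδ))
      (Cardinal.lt_ord.1 hγ)
  obtain ⟨c, hc⟩ := Cardinal.mem_range_lift_of_le hcard₁.le
  have hcκ : c < κ := by rwa [← Cardinal.lift_lt.{0,1}, hc]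
  obtain ⟨e⟩ : Nonempty (c.ord.ToType ≃ ((↥(Set.Iio δ) → Bool) × ↥(Set.Iio γ))) := by
    rw [← Cardinal.lift_mk_eq'.{0,1}]
    rw [Cardinal.mk_toType, Cardinal.card_ord, hc, Cardinal.lift_id']
  have hseg : ∀ p : c.ord.ToType, #(Set.Iio p) < κ :=
    fun p => lt_trans (Cardinal.mk_Iio_ord_toType p) hcκ
  have hstep : ∀ (p : c.ord.ToType) st τ, st < κ.ord →
      st ≤ (blockStep B hB δ hγ e p st τ).1 ∧ (blockStep B hB δ hγ e p st τ).1 < κ.ord :=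
    fun p st τ h => ⟨(blockStep_spec B hB δ hγ e p st τ h).1,
      (blockStep_spec B hB δ hγ e p st τ h).2.1⟩
  have hread : ∀ (p : c.ord.ToType) st τ τ', (∀ ζ, δ ≤ ζ → ζ < st → τ ζ = τ' ζ) →
      blockStep B hB δ hγ e p st τ = blockStep B hB δ hγ e p st τ' :=
    fun p st τ τ' h => blockStep_read B hB δ hγ e p st τ τ' h
  have hL := seg_lt hreg hseg hδ hstep
  have hglob : sSup (Set.range (fun p => (segF δ (blockStep B hB δ hγ e) p).1)) < κ.ord := by
    apply sSup_lt_ord' hreg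
    · have h := Cardinal.mk_range_le_lift
        (f := fun p : c.ord.ToType => (segF δ (blockStep B hB δ hγ e) p).1)
      rw [Cardinal.lift_id'] at h
      refine lt_of_le_of_lt h ?_
      rw [Cardinal.mk_toType, Cardinal.card_ord]
      exact Cardinal.lift_lt.2 hcκ
    · rintro x ⟨p, rfl⟩
      exact (hL p).2.2
  refine ⟨(δ + 1) ⊔ sSup (Set.range (fun p => (segF δ (blockStep B hB δ hγ e) p).1)),
    lt_of_lt_of_le (by rw [Ordinal.add_one_eq_succ]; exact Order.lt_succ δ) le_sup_left,
    max_lt hsucc hglob, segX (segF δ (blockStep B hB δ hγ e)), ?_⟩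
  intro s β hβ
  obtain ⟨p, hp⟩ := e.surjective ((fun ζ : ↥(Set.Iio δ) => s ζ.1), ⟨β.1, hβ⟩)
  have hstlt : segSt δ (segF δ (blockStep B hB δ hγ e)) p < κ.ord := (hL p).1
  have hmain : segF δ (blockStep B hB δ hγ e) p
      = blockStep B hB δ hγ e p (segSt δ (segF δ (blockStep B hB δ hγ e)) p)
        (segX (segF δ (blockStep B hB δ hγ e))) := seg_main hread p
  have hspec := blockStep_spec B hB δ hγ e p (segSt δ (segF δ (blockStep B hB δ hγ e)) p)
    (segX (segF δ (blockStep B hB δ hγ e))) hstlt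
  rw [← hmain] at hspec
  have hβeq : (⟨(e p).2.1, lt_trans (e p).2.2 hγ⟩ : Idx κ) = β := by
    apply Subtype.ext
    show ((e p).2 : Ordinal) = β.1
    rw [hp]
  rw [hβeq] at hspec
  have hple : (segF δ (blockStep B hB δ hγ e) p).1 ≤
      (δ + 1) ⊔ sSup (Set.range (fun p => (segF δ (blockStep B hB δ hγ e) p).1)) := by
    exact le_trans (le_csSup Ordinal.bddAbove_of_small (Set.mem_range_self p)) le_sup_right
  apply Set.eq_empty_iff_forall_notMem.2
  rintro y ⟨hy1, hy2⟩
  have hyc : y ∈ cyl κ (segF δ (blockStep B hB δ hγ e) p).1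
      (segF δ (blockStep B hB δ hγ e) p).2 := by
    intro b hb
    have hbglob : b.1 < (δ + 1) ⊔ sSup (Set.range (fun p =>
        (segF δ (blockStep B hB δ hγ e) p).1)) := lt_of_lt_of_le hb hple
    have hyg := hy1 b hbglob
    by_cases hbst : b.1 < segSt δ (segF δ (blockStep B hB δ hγ e)) p
    · rw [hspec.2.2.1 b.1 hbst]
      unfold blockU
      by_cases hbδ : b.1 < δ
      · rw [dif_pos hbδ]
        have h5 : (e p).1 = fun ζ : ↥(Set.Iio δ) => s ζ.1 := by rw [hp]
        rw [hyg, h5]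
        simp only [if_pos hbδ]
      · rw [dif_neg hbδ, if_pos hbst, hyg]
        simp only [if_neg hbδ]
    · have h6 : ¬ ((b : Ordinal) < δ) := fun h => hbst (lt_of_lt_of_le h seg_le)
      rw [hyg]
      simp only [if_neg h6]
      exact seg_x p b.1 (not_lt.1 hbst) hb
  exact Set.eq_empty_iff_forall_notMem.1 hspec.2.2.2 y ⟨hyc, hy2⟩


end GenCichon

namespace GenCichon

open Cardinal Set Ordinal

private noncomputable def outerStep {κ : Cardinal.{0}} (hinacc : κ.IsInaccessible)
    (B : Idx κ → Set (GenCantor κ)) (hB : ∀ i, IsNwd κ (B i))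
    (p : κ.ord.ToType) (st : Ordinal.{0}) (τ : Ordinal.{0} → Bool) :
    Ordinal.{0} × (Ordinal.{0} → Bool) :=
  if h : st < κ.ord then
    ((block hinacc B hB st ((Ordinal.ToType.mk (o := κ.ord)).symm p).1 h
        ((Ordinal.ToType.mk (o := κ.ord)).symm p).2).choose,
     (block hinacc B hB st ((Ordinal.ToType.mk (o := κ.ord)).symm p).1 h
        ((Ordinal.ToType.mk (o := κ.ord)).symm p).2).choose_spec.2.2.choose)
  else (0, fun _ => false)

private lemma outerStep_spec {κ : Cardinal.{0}} (hinacc : κ.IsInaccessible)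
    (B : Idx κ → Set (GenCantor κ)) (hB : ∀ i, IsNwd κ (B i))
    (p : κ.ord.ToType) (st : Ordinal.{0}) (τ : Ordinal.{0} → Bool) (h : st < κ.ord) :
    st < (outerStep hinacc B hB p st τ).1 ∧ (outerStep hinacc B hB p st τ).1 < κ.ord ∧
    ∀ s : Ordinal → Bool, ∀ β : Idx κ, β.1 < ((Ordinal.ToType.mk (o := κ.ord)).symm p).1 →
      cyl κ (outerStep hinacc B hB p st τ).1
        (fun ζ => if ζ < st then s ζ else (outerStep hinacc B hB p st τ).2 ζ) ∩ B β = ∅ := by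
  unfold outerStep
  rw [dif_pos h]
  have hspec := (block hinacc B hB st ((Ordinal.ToType.mk (o := κ.ord)).symm p).1 h
      ((Ordinal.ToType.mk (o := κ.ord)).symm p).2).choose_spec
  exact ⟨hspec.1, hspec.2.1, hspec.2.2.choose_spec⟩

theorem meager_is_combinatorially_meager (κ : Cardinal.{0})
    (hinacc : κ.IsInaccessible) (A : Set (GenCantor κ)) (hA : IsKMeager κ A) :
    ∃ (x : GenCantor κ) (I : IntervalPartition κ), ∀ y ∈ A, ¬ Matches κ y x I := by
  obtain ⟨B, hB, rfl⟩ := hA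
  have hreg := hinacc.isRegular
  have hlim : Order.IsSuccLimit κ.ord := Cardinal.isSuccLimit_ord hreg.aleph0_le
  have h0 : (0 : Ordinal) < κ.ord := hlim.pos
  have hseg : ∀ p : κ.ord.ToType, #(Set.Iio p) < κ := fun p => Cardinal.mk_Iio_ord_toType p
  have hstep : ∀ (p : κ.ord.ToType) st τ, st < κ.ord →
      st ≤ (outerStep hinacc B hB p st τ).1 ∧ (outerStep hinacc B hB p st τ).1 < κ.ord :=
    fun p st τ h => ⟨(outerStep_spec hinacc B hB p st τ h).1.le,
      (outerStep_spec hinacc B hB p st τ h).2.1⟩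
  have hread : ∀ (p : κ.ord.ToType) st τ τ', (∀ ζ, (0 : Ordinal) ≤ ζ → ζ < st → τ ζ = τ' ζ) →
      outerStep hinacc B hB p st τ = outerStep hinacc B hB p st τ' := fun p st τ τ' _ => rfl
  have hL := seg_lt hreg hseg h0 hstep
  have hmain : ∀ p, segF 0 (outerStep hinacc B hB) p =
      outerStep hinacc B hB p (segSt 0 (segF 0 (outerStep hinacc B hB)) p)
        (segX (segF 0 (outerStep hinacc B hB))) := seg_main hread
  have hstrict : ∀ p, segSt 0 (segF 0 (outerStep hinacc B hB)) p
      < (segF 0 (outerStep hinacc B hB) p).1 := fun p => by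
    rw [hmain p]
    exact (outerStep_spec hinacc B hB p _ _ (hL p).1).1
  set iso := Ordinal.ToType.mk (o := κ.ord) with hisod
  refine ⟨fun b => segX (segF 0 (outerStep hinacc B hB)) b.1,
    { pts := fun α => if h : α < κ.ord then
        segSt 0 (segF 0 (outerStep hinacc B hB)) (iso ⟨α, h⟩) else 0
      zero := ?_
      lt_ord := ?_
      strictMono := ?_
      isCont := ?_
      eq_zero_of_le := ?_ }, ?_⟩
  · beta_reduce
    rw [dif_pos h0]
    have hempty : Set.Iio (iso ⟨0, h0⟩) = ∅ := by
      ext q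
      simp only [Set.mem_Iio, Set.mem_empty_iff_false, iff_false, not_lt]
      by_contra hq
      push_neg at hq
      have h1 := iso.symm.strictMono hq
      rw [OrderIso.symm_apply_apply] at h1
      exact not_lt_zero (Subtype.coe_lt_coe.2 h1)
    unfold segSt
    rw [hempty, Set.image_empty, csSup_empty]
    simp
  · intro α h
    beta_reduce
    rw [dif_pos h]
    exact (hL _).1
  · intro α β hαβ hβ
    beta_reduce
    rw [dif_pos (hαβ.trans hβ), dif_pos hβ]
    exact lt_of_lt_of_le (hstrict _)
      (seg_mono (iso.strictMono (Subtype.mk_lt_mk.2 hαβ)))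
  · intro δl hδl hδlim
    beta_reduce
    rw [dif_pos hδl]
    haveI : Nonempty (↥(Set.Iio δl)) := ⟨⟨0, hδlim.pos⟩⟩
    apply le_antisymm
    · unfold segSt
      apply sup_le zero_le
      apply csSup_le
      · exact ⟨_, Set.mem_image_of_mem _
          (show iso ⟨0, h0⟩ ∈ Set.Iio (iso ⟨δl, hδl⟩) from
            iso.strictMono (Subtype.mk_lt_mk.2 hδlim.pos))⟩
      rintro x ⟨q, hq, rfl⟩
      have hμδ : ((iso.symm q : ↥(Set.Iio κ.ord)) : Ordinal) < δl := by
        have h1 := iso.symm.strictMono hq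
        rw [OrderIso.symm_apply_apply] at h1
        exact Subtype.coe_lt_coe.2 h1
      have hμ1 : ((iso.symm q : ↥(Set.Iio κ.ord)) : Ordinal) + 1 < δl := by
        rw [Ordinal.add_one_eq_succ]
        exact hδlim.succ_lt hμδ
      have hμ1κ : ((iso.symm q : ↥(Set.Iio κ.ord)) : Ordinal) + 1 < κ.ord := hμ1.trans hδl
      have hqlt : q < iso ⟨((iso.symm q : ↥(Set.Iio κ.ord)) : Ordinal) + 1, hμ1κ⟩ := by
        conv_lhs => rw [← iso.apply_symm_apply q]
        apply iso.strictMono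
        apply Subtype.mk_lt_mk.2
        rw [Ordinal.add_one_eq_succ]
        exact Order.lt_succ _
      refine le_trans (seg_mono hqlt) ?_
      have hrw : (fun β : ↥(Set.Iio δl) => if h : (β : Ordinal) < κ.ord then
          segSt 0 (segF 0 (outerStep hinacc B hB)) (iso ⟨β.1, h⟩) else 0)
          ⟨((iso.symm q : ↥(Set.Iio κ.ord)) : Ordinal) + 1, hμ1⟩
          = segSt 0 (segF 0 (outerStep hinacc B hB))
            (iso ⟨((iso.symm q : ↥(Set.Iio κ.ord)) : Ordinal) + 1, hμ1κ⟩) := dif_pos hμ1κ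
      rw [← hrw]
      exact le_ciSup Ordinal.bddAbove_of_small
        (⟨((iso.symm q : ↥(Set.Iio κ.ord)) : Ordinal) + 1, hμ1⟩ : ↥(Set.Iio δl))
    · apply ciSup_le
      intro b
      rw [dif_pos (lt_trans b.2 hδl)]
      exact le_trans (hL _).2.1 (seg_mono (iso.strictMono (Subtype.mk_lt_mk.2 b.2)))
  · intro α h
    beta_reduce
    rw [dif_neg (not_lt.2 h)]
  · intro y hy hmatch
    rw [Set.mem_iUnion] at hy
    obtain ⟨i, hyi⟩ := hy
    have hsucci : i.1 + 1 < κ.ord := by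
      rw [Ordinal.add_one_eq_succ]; exact hlim.succ_lt i.2
    obtain ⟨α, hα1, hα2, hagree⟩ := hmatch (i.1 + 1) hsucci
    have hstlt : segSt 0 (segF 0 (outerStep hinacc B hB)) (iso ⟨α, hα2⟩) < κ.ord := (hL _).1
    have hsp := outerStep_spec hinacc B hB (iso ⟨α, hα2⟩) _
      (segX (segF 0 (outerStep hinacc B hB))) hstlt
    rw [← hmain _] at hsp
    have hik : i.1 < ((Ordinal.ToType.mk (o := κ.ord)).symm (iso ⟨α, hα2⟩)).1 := by
      rw [← hisod, OrderIso.symm_apply_apply]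
      refine lt_of_lt_of_le ?_ hα1
      rw [Ordinal.add_one_eq_succ]
      exact Order.lt_succ _
    have hkey := hsp.2.2 (fun ζ => if h : ζ < κ.ord then y ⟨ζ, h⟩ else false) i hik
    apply Set.eq_empty_iff_forall_notMem.1 hkey y
    refine ⟨?_, hyi⟩
    intro b hb
    beta_reduce
    by_cases hbst : (b : Ordinal) < segSt 0 (segF 0 (outerStep hinacc B hB)) (iso ⟨α, hα2⟩)
    · rw [if_pos hbst, dif_pos (show (b : Ordinal) < κ.ord from b.2)]
    · rw [if_neg hbst]
      have hx : y b = segX (segF 0 (outerStep hinacc B hB)) b.1 := by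
        refine hagree b ?_ ?_
        · show (if h : α < κ.ord then
            segSt 0 (segF 0 (outerStep hinacc B hB)) (iso ⟨α, h⟩) else 0) ≤ (b : Ordinal)
          rw [dif_pos hα2]
          exact not_lt.1 hbst
        · show (b : Ordinal) < (if h : α + 1 < κ.ord then
            segSt 0 (segF 0 (outerStep hinacc B hB)) (iso ⟨α + 1, h⟩) else 0)
          have hα1' : α + 1 < κ.ord := by
            rw [Ordinal.add_one_eq_succ]; exact hlim.succ_lt hα2
          rw [dif_pos hα1']
          refine lt_of_lt_of_le hb (seg_mono (iso.strictMono (Subtype.mk_lt_mk.2 ?_)))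
          rw [Ordinal.add_one_eq_succ]
          exact Order.lt_succ _
      rw [hx]
      exact seg_x _ b.1 (not_lt.1 hbst) hb

end GenCichon
end

section
/- Let κ be an uncountable regular cardinal. Then 𝔟_κ ≤ 𝔟_κ(≠*) ≤ non(𝓜_κ) and cov(𝓜_κ) ≤ 𝔡_κ(≠*) ≤ 𝔡_κ. -/
namespace GenCichon

open Cardinal Set Ordinal

noncomputable section Helpers

lemma core_bdd {κ : Cardinal.{0}} (hreg : κ.IsRegular) {ι : Type 1} (f : ι → Ordinal.{0})
    (hι : #ι < Cardinal.lift.{1} κ) (hf : ∀ i, f i < κ.ord) :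
    ∃ γ < κ.ord, ∀ i, f i ≤ γ := by
  set F : ι → Ordinal.{1} := fun i => Ordinal.lift.{1} (f i) with hF
  have hc : iSup F < Ordinal.lift.{1} κ.ord := by
    apply Ordinal.iSup_lt_ord_lift.{1,1}
    · rw [← Ordinal.lift_cof, Cardinal.IsRegular.cof_eq hreg]
      simpa using hι
    · intro i; exact Ordinal.lift_lt.2 (hf i)
  obtain ⟨γ, hγ⟩ := Ordinal.mem_range_lift_of_le hc.le
  refine ⟨γ, ?_, fun i => ?_⟩
  · rwa [← Ordinal.lift_lt.{1}, hγ]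
  · rw [← Ordinal.lift_le.{1}, hγ]
    exact Ordinal.le_iSup F i

/-- A subset of `Idx κ` of size `< κ` is bounded. -/
lemma set_bdd {κ : Cardinal.{0}} (hreg : κ.IsRegular) {S : Set (Idx κ)}
    (hS : #S < Cardinal.lift.{1} κ) : ∃ γ < κ.ord, ∀ α ∈ S, α.1 ≤ γ := by
  obtain ⟨γ, hγ, hb⟩ := core_bdd hreg (fun s : ↥S => s.1.1) hS (fun s => s.1.2)
  exact ⟨γ, hγ, fun α hα => hb ⟨α, hα⟩⟩

/-- bounded subsets of `Idx κ` are small. -/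
lemma mk_lt_of_bdd {κ : Cardinal.{0}} {γ : Ordinal} (hγ : γ < κ.ord) :
    #{α : Idx κ | α.1 < γ} < Cardinal.lift.{1} κ := by
  have h1 : #{α : Idx κ | α.1 < γ} ≤ #(Set.Iio γ) := by
    apply Cardinal.mk_le_of_injective (f := fun α => (⟨α.1.1, α.2⟩ : Set.Iio γ))
    intro a b hab
    have : a.1.1 = b.1.1 := congrArg (fun z : Set.Iio γ => z.1) hab
    exact Subtype.ext (Subtype.ext this)
  refine h1.trans_lt ?_
  rw [Ordinal.mk_Iio_ordinal]
  rw [Cardinal.lift_lt]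
  exact (Cardinal.lt_ord).1 hγ

lemma fam_bdd {κ : Cardinal.{0}} (hreg : κ.IsRegular) {o : Ordinal.{0}} (ho : o < κ.ord)
    (f : Ordinal.{0} → Ordinal.{0}) (hf : ∀ j < o, f j < κ.ord) :
    ∃ γ < κ.ord, ∀ j < o, f j ≤ γ := by
  have hι : #(Set.Iio o) < Cardinal.lift.{1} κ := by
    rw [Ordinal.mk_Iio_ordinal, Cardinal.lift_lt]
    exact (Cardinal.lt_ord).1 ho
  obtain ⟨γ, hγ, hb⟩ := core_bdd hreg (fun j : ↥(Set.Iio o) => f j.1) hι (fun j => hf j.1 j.2)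
  exact ⟨γ, hγ, fun j hj => hb ⟨j, hj⟩⟩

lemma add_lt_ord {κ : Cardinal.{0}} (h : Cardinal.aleph0 ≤ κ) {a b : Ordinal}
    (ha : a < κ.ord) (hb : b < κ.ord) : a + b < κ.ord := by
  rw [Cardinal.lt_ord] at *
  rw [Ordinal.card_add]
  exact Cardinal.add_lt_of_lt h ha hb

lemma one_lt_ord {κ : Cardinal.{0}} (h : Cardinal.aleph0 ≤ κ) : (1 : Ordinal) < κ.ord := by
  rw [Cardinal.lt_ord]; simpa using one_lt_aleph0.trans_le h

lemma zero_lt_ord {κ : Cardinal.{0}} (h : Cardinal.aleph0 ≤ κ) : (0 : Ordinal) < κ.ord :=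
  lt_trans zero_lt_one (one_lt_ord h)

lemma succ_lt_ord {κ : Cardinal.{0}} (h : Cardinal.aleph0 ≤ κ) {a : Ordinal}
    (ha : a < κ.ord) : a + 1 < κ.ord := add_lt_ord h ha (one_lt_ord h)

/-- extension of `x` by `false` beyond `κ`. -/
def X0 (κ : Cardinal.{0}) (x : GenCantor κ) : Ordinal → Bool :=
  fun β => if h : β < κ.ord then x ⟨β, h⟩ else false

/-- the coding function `2^κ → κ^κ`. -/
def code (κ : Cardinal.{0}) (x : GenCantor κ) : GenBaire κ := fun α =>
  let β₀ := sInf {β | α.1 ≤ β ∧ X0 κ x β = true}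
  let v := sInf {γ | X0 κ x (β₀ + 1 + γ) = false}
  if h : v < κ.ord then ⟨v, h⟩ else α

lemma code_eval (κ : Cardinal.{0}) (x : GenCantor κ) {α v : Ordinal} (hα : α < κ.ord) (hv : v < κ.ord)
    (h1 : X0 κ x α = true) (h2 : ∀ γ < v, X0 κ x (α + 1 + γ) = true)
    (h3 : X0 κ x (α + 1 + v) = false) :
    code κ x ⟨α, hα⟩ = ⟨v, hv⟩ := by
  have hβ₀ : sInf {β | α ≤ β ∧ X0 κ x β = true} = α := by
    apply le_antisymm
    · exact csInf_le' ⟨le_refl α, h1⟩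
    · exact (csInf_mem (s := {β | α ≤ β ∧ X0 κ x β = true}) ⟨α, le_refl α, h1⟩).1
  have hvv : sInf {γ | X0 κ x (α + 1 + γ) = false} = v := by
    apply le_antisymm
    · exact csInf_le' h3
    · by_contra hlt
      push_neg at hlt
      have hmem := csInf_mem (s := {γ | X0 κ x (α + 1 + γ) = false}) ⟨v, h3⟩
      have := h2 _ hlt
      rw [Set.mem_setOf_eq, this] at hmem
      simp at hmem
  simp only [code, hβ₀, hvv, dif_pos hv]

end Helpers
noncomputable section Helpers2
variable (κ : Cardinal.{0})

lemma IsNwd_mono {A A' : Set (GenCantor κ)} (hsub : A' ⊆ A) (hA : IsNwd κ A) :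
    IsNwd κ A' := by
  intro δ hδ σ
  obtain ⟨δ', h1, h2, σ', h3, h4⟩ := hA δ hδ σ
  refine ⟨δ', h1, h2, σ', h3, ?_⟩
  rw [Set.eq_empty_iff_forall_notMem] at h4 ⊢
  exact fun x hx => h4 x ⟨hx.1, hsub hx.2⟩

lemma IsKMeager_mono {A X : Set (GenCantor κ)} (hsub : X ⊆ A) (hA : IsKMeager κ A) :
    IsKMeager κ X := by
  obtain ⟨B, hB, hBA⟩ := hA
  refine ⟨fun i => B i ∩ X, fun i => IsNwd_mono κ Set.inter_subset_left (hB i), ?_⟩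
  rw [← Set.iUnion_inter, ← hBA, Set.inter_eq_self_of_subset_right hsub]

/-- the basic nowhere dense sets witnessing meagerness of `Mset`. -/
def Dset (g : GenBaire κ) (i : Idx κ) : Set (GenCantor κ) :=
  {x | ∀ α : Idx κ, i.1 ≤ α.1 → code κ x α ≠ g α}

lemma Dset_nwd (hκ : Cardinal.aleph0 ≤ κ) (g : GenBaire κ) (i : Idx κ) :
    IsNwd κ (Dset κ g i) := by
  intro δ hδ σ
  set α := max δ i.1 with hαdef
  have hα : α < κ.ord := max_lt hδ i.2
  set v := (g ⟨α, hα⟩).1 with hvdef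
  have hv : v < κ.ord := (g ⟨α, hα⟩).2
  have hle1 : α ≤ α + 1 := le_self_add
  have hle2 : α + 1 ≤ α + 1 + v := le_self_add
  have hle : α ≤ α + 1 + v := hle1.trans hle2
  have hαlt : α < α + 1 + v := lt_of_lt_of_le (lt_add_one α) hle2
  have hδ'lt : α + 1 + v + 1 < κ.ord :=
    succ_lt_ord hκ (add_lt_ord hκ (succ_lt_ord hκ hα) hv)
  have hδα : δ ≤ α := le_max_left δ i.1
  set σ' : Ordinal → Bool :=
    fun β => if β < δ then σ β else if α ≤ β ∧ β < α + 1 + v then true else false with hσ'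
  refine ⟨α + 1 + v + 1, hδα.trans (hle.trans le_self_add),
    hδ'lt, σ', fun β hβ => if_pos hβ, ?_⟩
  rw [Set.eq_empty_iff_forall_notMem]
  rintro x ⟨hcyl, hD⟩
  have hXval : ∀ β : Ordinal, (h : β < κ.ord) → β < α + 1 + v + 1 → X0 κ x β = σ' β := by
    intro β h hβ
    simp only [X0, dif_pos h]
    exact hcyl ⟨β, h⟩ hβ
  have h1 : X0 κ x α = true := by
    rw [hXval α hα (lt_of_le_of_lt hle (lt_add_one _))]
    simp only [hσ', if_neg (not_lt.2 hδα)]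
    rw [if_pos ⟨le_refl α, hαlt⟩]
  have h2 : ∀ γ < v, X0 κ x (α + 1 + γ) = true := by
    intro γ hγ
    have hlt : α + 1 + γ < α + 1 + v := by exact (add_lt_add_iff_left (α + 1)).2 hγ
    have hk : α + 1 + γ < κ.ord := hlt.trans (lt_of_le_of_lt le_self_add hδ'lt)
    have hαle : α ≤ α + 1 + γ := hle1.trans le_self_add
    rw [hXval _ hk (hlt.trans (lt_add_one _))]
    simp only [hσ', if_neg (not_lt.2 (hδα.trans hαle))]
    rw [if_pos ⟨hαle, hlt⟩]
  have h3 : X0 κ x (α + 1 + v) = false := by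
    have hk : α + 1 + v < κ.ord := lt_of_le_of_lt le_self_add hδ'lt |>.trans_le (le_refl _)
    rw [hXval _ (lt_of_lt_of_le (lt_add_one _) hδ'lt.le) (lt_add_one _)]
    simp only [hσ', if_neg (not_lt.2 (hδα.trans hle))]
    rw [if_neg]
    rintro ⟨-, hcon⟩
    exact absurd hcon (lt_irrefl _)
  have hcode : code κ x ⟨α, hα⟩ = g ⟨α, hα⟩ := by
    rw [code_eval κ x hα hv h1 h2 h3]
  exact hD ⟨α, hα⟩ (le_max_right δ i.1) hcode

/-- the `κ`-meager set of reals whose code is eventually different from `g`. -/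
def Mset (g : GenBaire κ) : Set (GenCantor κ) := {x | EvDiff κ (code κ x) g}

lemma Dset_subset_Mset (g : GenBaire κ) (i : Idx κ) : Dset κ g i ⊆ Mset κ g := by
  intro x hx
  have hsub : {α : Idx κ | code κ x α = g α} ⊆ {α : Idx κ | α.1 < i.1} := by
    intro α hα
    by_contra hcon
    exact hx α (not_lt.1 hcon) hα
  exact (Cardinal.mk_le_mk_of_subset hsub).trans_lt (mk_lt_of_bdd i.2)

lemma Mset_meager (hreg : κ.IsRegular) (g : GenBaire κ) : IsKMeager κ (Mset κ g) := by
  refine ⟨fun i => Dset κ g i, fun i => Dset_nwd κ hreg.aleph0_le g i, ?_⟩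
  apply Set.Subset.antisymm
  · intro x hx
    obtain ⟨γ, hγ, hb⟩ := set_bdd hreg hx
    rw [Set.mem_iUnion]
    refine ⟨⟨γ + 1, succ_lt_ord hreg.aleph0_le hγ⟩, fun α hα hcon => ?_⟩
    exact absurd (hb α hcon) (not_le.2 (lt_of_lt_of_le (lt_add_one γ) hα))
  · exact Set.iUnion_subset fun i => Dset_subset_Mset κ g i

end Helpers2
noncomputable section BCT
open scoped Classical
variable (κ : Cardinal.{0})

lemma cyl_anti {δ₁ δ₂ : Ordinal} (h : δ₁ ≤ δ₂) (σ : Ordinal → Bool) :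
    cyl κ δ₂ σ ⊆ cyl κ δ₁ σ := fun x hx β hβ => hx β (lt_of_lt_of_le hβ h)

lemma lt_add_one_iff' {a b : Ordinal} : a < b + 1 ↔ a ≤ b := by
  rw [Ordinal.add_one_eq_succ, Order.lt_succ_iff]

/-- transfinite recursion building a generic filter avoiding the given nowhere dense sets,
driven by an "extension operator" `E`. -/
def bctF (E : Ordinal → (Ordinal × (Ordinal → Bool)) → Ordinal × (Ordinal → Bool)) :
    Ordinal → Ordinal × (Ordinal → Bool) :=
  Ordinal.lt_wf.fix (fun i rec =>
    E i (⨆ j : ↥(Set.Iio i), (rec j.1 j.2).1,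
         fun β => if h : ∃ j : ↥(Set.Iio i), β < (rec j.1 j.2).1
                  then (rec (Classical.choose h).1 (Classical.choose h).2).2 β else false))

lemma bctF_eq (E : Ordinal → (Ordinal × (Ordinal → Bool)) → Ordinal × (Ordinal → Bool))
    (i : Ordinal) : bctF E i =
    E i (⨆ j : ↥(Set.Iio i), (bctF E j.1).1,
         fun β => if h : ∃ j : ↥(Set.Iio i), β < (bctF E j.1).1
                  then (bctF E (Classical.choose h).1).2 β else false) := by
  rw [bctF, WellFounded.fix_eq]

variable {κ} in
/-- the main invariant of the recursion. -/
lemma bct_inv (B : Idx κ → Set (GenCantor κ)) (hreg : κ.IsRegular)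
    (E : Ordinal → (Ordinal × (Ordinal → Bool)) → Ordinal × (Ordinal → Bool))
    (hE : ∀ i, ∀ p : Ordinal × (Ordinal → Bool), p.1 < κ.ord →
      p.1 < (E i p).1 ∧ (E i p).1 < κ.ord ∧ (∀ β < p.1, (E i p).2 β = p.2 β) ∧
      ∀ (hi : i < κ.ord), cyl κ (E i p).1 (E i p).2 ∩ B ⟨i, hi⟩ = ∅) :
    ∀ i, i < κ.ord → (bctF E i).1 < κ.ord ∧ i < (bctF E i).1 ∧
      (∀ j, j < i → (bctF E j).1 ≤ (bctF E i).1 ∧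
        ∀ β, β < (bctF E j).1 → (bctF E i).2 β = (bctF E j).2 β) ∧
      ∀ (hi : i < κ.ord), cyl κ (bctF E i).1 (bctF E i).2 ∩ B ⟨i, hi⟩ = ∅ := by
  intro i
  induction i using Ordinal.induction with
  | h i IH =>
  intro hi
  set s : Ordinal := ⨆ j : ↥(Set.Iio i), (bctF E j.1).1 with hs
  set τ : Ordinal → Bool :=
    fun β => if h : ∃ j : ↥(Set.Iio i), β < (bctF E j.1).1
             then (bctF E (Classical.choose h).1).2 β else false with hτ
  -- bounds on previous stages
  have hprev : ∀ j, j < i → (bctF E j).1 < κ.ord ∧ j < (bctF E j).1 :=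
    fun j hj => ⟨(IH j hj (hj.trans hi)).1, (IH j hj (hj.trans hi)).2.1⟩
  -- the sup is < κ.ord
  obtain ⟨γ, hγ, hγb⟩ := fam_bdd hreg hi (fun j => (bctF E j).1)
    (fun j hj => (hprev j hj).1)
  have hsle : s ≤ γ := by
    apply csSup_le'
    rintro o ⟨j, rfl⟩
    exact hγb j.1 j.2
  have hsκ : s < κ.ord := lt_of_le_of_lt hsle hγ
  have hbdd : BddAbove (Set.range fun j : ↥(Set.Iio i) => (bctF E j.1).1) :=
    ⟨γ, by rintro o ⟨j, rfl⟩; exact hγb j.1 j.2⟩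
  have hjs : ∀ j, j < i → (bctF E j).1 ≤ s := fun j hj =>
    le_ciSup hbdd (⟨j, hj⟩ : ↥(Set.Iio i))
  have his : i ≤ s := by
    by_contra hcon
    push_neg at hcon
    exact absurd (hjs s hcon) (not_le.2 (hprev s hcon).2)
  -- coherence of τ with previous stages
  have hτcoh : ∀ j, j < i → ∀ β, β < (bctF E j).1 → τ β = (bctF E j).2 β := by
    intro j hj β hβ
    have hex : ∃ j' : ↥(Set.Iio i), β < (bctF E j'.1).1 := ⟨⟨j, hj⟩, hβ⟩
    rw [hτ]
    simp only [dif_pos hex]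
    set j' := Classical.choose hex with hj'def
    have hβ' : β < (bctF E j'.1).1 := Classical.choose_spec hex
    rcases lt_trichotomy j'.1 j with hlt | heq | hgt
    · exact (((IH j hj (hj.trans hi)).2.2.1 j'.1 hlt).2 β hβ').symm
    · exact congrArg (fun o => (bctF E o).2 β) heq
    · exact ((IH j'.1 j'.2 (lt_trans j'.2 hi)).2.2.1 j hgt).2 β hβ
  obtain ⟨he1, he2, he3, he4⟩ := hE i (s, τ) hsκ
  rw [bctF_eq E i, ← hs, ← hτ]
  refine ⟨he2, lt_of_le_of_lt his he1, fun j hj => ⟨?_, ?_⟩, he4⟩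
  · exact (hjs j hj).trans he1.le
  · intro β hβ
    rw [he3 β (lt_of_lt_of_le hβ (hjs j hj))]
    exact hτcoh j hj β hβ

variable {κ} in
lemma univ_not_meager (hreg : κ.IsRegular) :
    ¬ IsKMeager κ (Set.univ : Set (GenCantor κ)) := by
  have hκ : Cardinal.aleph0 ≤ κ := hreg.aleph0_le
  rintro ⟨B, hB, hU⟩
  have hex : ∀ (i : Ordinal) (p : Ordinal × (Ordinal → Bool)),
      ∃ q : Ordinal × (Ordinal → Bool), p.1 < κ.ord →
        p.1 < q.1 ∧ q.1 < κ.ord ∧ (∀ β < p.1, q.2 β = p.2 β) ∧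
        ∀ (hi : i < κ.ord), cyl κ q.1 q.2 ∩ B ⟨i, hi⟩ = ∅ := by
    intro i p
    by_cases hi : i < κ.ord
    · by_cases hp : p.1 < κ.ord
      · obtain ⟨δ', h1, h2, σ', h3, h4⟩ := hB ⟨i, hi⟩ p.1 hp p.2
        refine ⟨(δ' + 1, σ'), fun _ => ⟨lt_of_le_of_lt h1 (lt_add_one _), succ_lt_ord hκ h2,
          h3, fun hi' => ?_⟩⟩
        rw [Set.eq_empty_iff_forall_notMem] at h4 ⊢
        exact fun x hx => h4 x ⟨cyl_anti κ le_self_add σ' hx.1, hx.2⟩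
      · exact ⟨(p.1 + 1, p.2), fun hp' => absurd hp' hp⟩
    · exact ⟨(p.1 + 1, p.2), fun hp => ⟨lt_add_one _, succ_lt_ord hκ hp,
        fun β _ => rfl, fun hi' => absurd hi' hi⟩⟩
  choose E hE using hex
  have inv := bct_inv B hreg E hE
  set x : GenCantor κ := fun β => (bctF E (β.1 + 1)).2 β.1 with hx
  have hmem : ∀ i : Idx κ, x ∈ cyl κ (bctF E i.1).1 (bctF E i.1).2 := by
    intro i β hβ
    have hβ1 : β.1 + 1 < κ.ord := succ_lt_ord hκ β.2
    rcases lt_trichotomy (β.1 + 1) i.1 with hlt | heq | hgt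
    · have h1 := (inv i.1 i.2).2.2.1 (β.1 + 1) hlt
      have h2 : β.1 < (bctF E (β.1 + 1)).1 := lt_trans (lt_add_one _) (inv _ hβ1).2.1
      exact (h1.2 β.1 h2).symm
    · rw [hx]; simp only [heq]
    · have h1 := (inv (β.1 + 1) hβ1).2.2.1 i.1 hgt
      exact h1.2 β.1 hβ
  have : x ∈ Set.univ := Set.mem_univ x
  rw [hU] at this
  obtain ⟨i, hi⟩ := Set.mem_iUnion.1 this
  have hdisj := (inv i.1 i.2).2.2.2 i.2
  rw [Set.eq_empty_iff_forall_notMem] at hdisj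
  exact hdisj x ⟨hmem i, hi⟩

end BCT
section Final
variable {κ : Cardinal.{0}}

lemma sInf_le_sInf_of_forall {S T : Set Cardinal.{1}} (hT : T.Nonempty)
    (h : ∀ c ∈ T, ∃ c' ∈ S, c' ≤ c) : sInf S ≤ sInf T := by
  obtain ⟨c', hc', hle⟩ := h _ (csInf_mem hT)
  exact (csInf_le' hc').trans hle

lemma mk_idx : #(Idx κ) = Cardinal.lift.{1} κ := by
  rw [Ordinal.mk_Iio_ordinal, Cardinal.card_ord]

lemma not_evdiff_self (g : GenBaire κ) : ¬ EvDiff κ g g := by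
  unfold EvDiff
  have : {α : Idx κ | g α = g α} = Set.univ := by ext α; simp
  rw [this, Cardinal.mk_univ, mk_idx]
  exact lt_irrefl _

lemma bNeq_mem : #(Set.univ : Set (GenBaire κ)) ∈
    { c : Cardinal.{1} | ∃ F : Set (GenBaire κ),
      (∀ g : GenBaire κ, ∃ f ∈ F, ¬ EvDiff κ f g) ∧ c = #F } :=
  ⟨Set.univ, fun g => ⟨g, Set.mem_univ g, not_evdiff_self g⟩, rfl⟩

/-- the successor function on `κ^κ`. -/
noncomputable def succFn (hκ : Cardinal.aleph0 ≤ κ) (g : GenBaire κ) : GenBaire κ :=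
  fun β => ⟨(g β).1 + 1, succ_lt_ord hκ (g β).2⟩

lemma evdom_succFn (hκ : Cardinal.aleph0 ≤ κ) (g : GenBaire κ) :
    EvDom κ g (succFn hκ g) := by
  refine ⟨⟨0, zero_lt_ord hκ⟩, fun β _ => ?_⟩
  exact Subtype.mk_lt_mk.2 (lt_add_one _)

lemma evdiff_symm {f g : GenBaire κ} (h : EvDiff κ f g) : EvDiff κ g f := by
  unfold EvDiff at h ⊢
  have he : {α : Idx κ | g α = f α} = {α : Idx κ | f α = g α} := by
    ext α; exact eq_comm
  rwa [he]

lemma evdiff_succFn (hκ : Cardinal.aleph0 ≤ κ) (g : GenBaire κ) :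
    EvDiff κ (succFn hκ g) g := by
  unfold EvDiff
  have : {α : Idx κ | succFn hκ g α = g α} = ∅ := by
    ext α
    simp only [Set.mem_setOf_eq, Set.mem_empty_iff_false, iff_false]
    intro hcon
    exact absurd (congrArg Subtype.val hcon).symm (ne_of_lt (lt_add_one _))
  rw [this]
  simpa using lt_of_lt_of_le Cardinal.aleph0_pos (by simpa using hκ)

lemma dNeq_mem (hκ : Cardinal.aleph0 ≤ κ) : #(Set.univ : Set (GenBaire κ)) ∈
    { c : Cardinal.{1} | ∃ F : Set (GenBaire κ),
      (∀ g : GenBaire κ, ∃ f ∈ F, EvDiff κ f g) ∧ c = #F } :=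
  ⟨Set.univ, fun g => ⟨succFn hκ g, Set.mem_univ _, evdiff_succFn hκ g⟩, rfl⟩

lemma dK_mem (hκ : Cardinal.aleph0 ≤ κ) : #(Set.univ : Set (GenBaire κ)) ∈
    { c : Cardinal.{1} | ∃ F : Set (GenBaire κ),
      (∀ g : GenBaire κ, ∃ f ∈ F, EvDom κ g f) ∧ c = #F } :=
  ⟨Set.univ, fun g => ⟨succFn hκ g, Set.mem_univ _, evdom_succFn hκ g⟩, rfl⟩

/-- eventual domination by `g` implies eventual difference. -/
lemma evdiff_of_evdom (hκ : Cardinal.aleph0 ≤ κ) {f g : GenBaire κ}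
    (h : EvDom κ f g) : EvDiff κ f g := by
  obtain ⟨α, hα⟩ := h
  have hsub : {β : Idx κ | f β = g β} ⊆ {β : Idx κ | β.1 < α.1 + 1} := by
    intro β hβ
    by_contra hcon
    simp only [Set.mem_setOf_eq, not_lt] at hcon
    have hαβ : α < β := by
      rw [← Subtype.coe_lt_coe]
      exact lt_of_lt_of_le (lt_add_one _) hcon
    exact absurd hβ (ne_of_lt (hα β hαβ))
  exact (Cardinal.mk_le_mk_of_subset hsub).trans_lt
    (mk_lt_of_bdd (succ_lt_ord hκ α.2))

end Final
theorem evdiff_between (κ : Cardinal.{0})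
    (hreg : κ.IsRegular) (hunc : Cardinal.aleph0 < κ) :
    (bK κ ≤ bNeq κ ∧ bNeq κ ≤ nonM κ) ∧ (covM κ ≤ dNeq κ ∧ dNeq κ ≤ dK κ) := by
  have hκ : Cardinal.aleph0 ≤ κ := hunc.le
  refine ⟨⟨?_, ?_⟩, ?_, ?_⟩
  · -- bK ≤ bNeq
    unfold bK bNeq
    refine sInf_le_sInf_of_forall ⟨_, bNeq_mem⟩ ?_
    rintro c ⟨F, hF, rfl⟩
    refine ⟨#F, ⟨F, fun g => ?_, rfl⟩, le_refl _⟩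
    obtain ⟨f, hfF, hf⟩ := hF g
    exact ⟨f, hfF, fun hdom => hf (evdiff_of_evdom hκ hdom)⟩
  · -- bNeq ≤ nonM
    unfold bNeq nonM
    refine sInf_le_sInf_of_forall ⟨_, ⟨Set.univ, univ_not_meager hreg, rfl⟩⟩ ?_
    rintro c ⟨X, hX, rfl⟩
    refine ⟨#(code κ '' X), ⟨code κ '' X, fun g => ?_, rfl⟩, Cardinal.mk_image_le⟩
    by_contra hcon
    push_neg at hcon
    apply hX
    apply IsKMeager_mono κ (A := Mset κ g) ?_ (Mset_meager κ hreg g)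
    intro x hx
    exact hcon (code κ x) (Set.mem_image_of_mem _ hx)
  · -- covM ≤ dNeq
    unfold covM dNeq
    refine sInf_le_sInf_of_forall ⟨_, dNeq_mem hκ⟩ ?_
    rintro c ⟨F, hF, rfl⟩
    refine ⟨#((fun f => Mset κ f) '' F), ⟨(fun f => Mset κ f) '' F, ?_, ?_, rfl⟩,
      Cardinal.mk_image_le⟩
    · rintro A ⟨f, hfF, rfl⟩
      exact Mset_meager κ hreg f
    · apply Set.eq_univ_of_forall
      intro x
      obtain ⟨f, hfF, hEv⟩ := hF (code κ x)
      exact ⟨Mset κ f, Set.mem_image_of_mem _ hfF, evdiff_symm hEv⟩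
  · -- dNeq ≤ dK
    unfold dNeq dK
    refine sInf_le_sInf_of_forall ⟨_, dK_mem hκ⟩ ?_
    rintro c ⟨F, hF, rfl⟩
    refine ⟨#F, ⟨F, fun g => ?_, rfl⟩, le_refl _⟩
    obtain ⟨f, hfF, hf⟩ := hF g
    exact ⟨f, hfF, evdiff_symm (evdiff_of_evdom hκ hf)⟩

end GenCichon
end

section
/- Let κ be an uncountable regular cardinal. Every subset X ⊆ 2^κ of cardinality less than 2^{<κ} is κ-meager; consequently non(𝓜_κ) ≥ 2^{<κ}. -/
namespace GenCichon

open Cardinal Set Ordinal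

private lemma nwd_choice (κ : Cardinal.{0}) (B : Idx κ → Set (GenCantor κ))
    (hB : ∀ i, IsNwd κ (B i)) (i : Idx κ) (δ : Ordinal.{0}) (hδ : δ < κ.ord)
    (σ : Ordinal → Bool) :
    ∃ p : Ordinal.{0} × (Ordinal.{0} → Bool), δ ≤ p.1 ∧ p.1 < κ.ord ∧
      (∀ β < δ, p.2 β = σ β) ∧ cyl κ p.1 p.2 ∩ B i = ∅ := by
  obtain ⟨δ', h1, h2, σ', h3, h4⟩ := hB i δ hδ σ
  exact ⟨(δ', σ'), h1, h2, h3, h4⟩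

open Classical in
noncomputable def seq (κ : Cardinal.{0}) (B : Idx κ → Set (GenCantor κ))
    (hB : ∀ i, IsNwd κ (B i)) (α : Ordinal.{0}) : Ordinal.{0} × (Ordinal.{0} → Bool) :=
  if hα : α < κ.ord ∧
      max (α + 1) (Ordinal.bsup α fun β (_ : β < α) => (seq κ B hB β).1) < κ.ord then
    Classical.choose (nwd_choice κ B hB ⟨α, hα.1⟩ _ hα.2
      (fun γ => if h : ∃ β : Set.Iio α, γ < (seq κ B hB β.1).1
        then (seq κ B hB h.choose.1).2 γ else false))
  else (0, fun _ => false)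
termination_by α
decreasing_by
  all_goals first | assumption | exact β.2 | exact h.choose.2

noncomputable def din (κ : Cardinal.{0}) (B : Idx κ → Set (GenCantor κ))
    (hB : ∀ i, IsNwd κ (B i)) (α : Ordinal.{0}) : Ordinal.{0} :=
  max (α + 1) (Ordinal.bsup α fun β (_ : β < α) => (seq κ B hB β).1)

open Classical in
noncomputable def tau (κ : Cardinal.{0}) (B : Idx κ → Set (GenCantor κ))
    (hB : ∀ i, IsNwd κ (B i)) (α : Ordinal.{0}) : Ordinal.{0} → Bool := fun γ =>
  if h : ∃ β : Set.Iio α, γ < (seq κ B hB β.1).1 then (seq κ B hB h.choose.1).2 γ else false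

lemma seq_def (κ : Cardinal.{0}) (B : Idx κ → Set (GenCantor κ))
    (hB : ∀ i, IsNwd κ (B i)) (α : Ordinal.{0}) :
    seq κ B hB α =
      if hα : α < κ.ord ∧ din κ B hB α < κ.ord then
        Classical.choose (nwd_choice κ B hB ⟨α, hα.1⟩ _ hα.2 (tau κ B hB α))
      else (0, fun _ => false) := by
  rw [seq]; rfl

lemma seq_spec (κ : Cardinal.{0}) (B : Idx κ → Set (GenCantor κ))
    (hB : ∀ i, IsNwd κ (B i)) {α : Ordinal.{0}} (hα : α < κ.ord)
    (hd : din κ B hB α < κ.ord) :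
    din κ B hB α ≤ (seq κ B hB α).1 ∧ (seq κ B hB α).1 < κ.ord ∧
      (∀ β < din κ B hB α, (seq κ B hB α).2 β = tau κ B hB α β) ∧
      cyl κ (seq κ B hB α).1 (seq κ B hB α).2 ∩ B ⟨α, hα⟩ = ∅ := by
  have h := Classical.choose_spec (nwd_choice κ B hB ⟨α, hα⟩ (din κ B hB α) hd (tau κ B hB α))
  rw [seq_def κ B hB α, dif_pos ⟨hα, hd⟩]
  exact h

lemma seq_good (κ : Cardinal.{0}) (B : Idx κ → Set (GenCantor κ))
    (hB : ∀ i, IsNwd κ (B i)) (hreg : κ.IsRegular) :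
    ∀ α : Ordinal.{0}, α < κ.ord →
      (seq κ B hB α).1 < κ.ord ∧ α < (seq κ B hB α).1 ∧
      (∀ β < α, (seq κ B hB β).1 ≤ (seq κ B hB α).1) ∧
      (∀ β < α, ∀ γ, γ < (seq κ B hB β).1 → (seq κ B hB α).2 γ = (seq κ B hB β).2 γ) := by
  intro α
  induction α using Ordinal.induction with
  | _ α IH =>
  intro hα
  have hone : α < α + 1 := by rw [Ordinal.add_one_eq_succ]; exact Order.lt_succ_of_not_isMax (not_isMax α)
  have hd : din κ B hB α < κ.ord := by
    apply max_lt
    · rw [Ordinal.add_one_eq_succ]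
      exact (Cardinal.isSuccLimit_ord hreg.aleph0_le).succ_lt hα
    · exact Cardinal.bsup_lt_ord_of_isRegular hreg (Cardinal.lt_ord.mp hα)
        (fun i hi => (IH i hi (hi.trans hα)).1)
  obtain ⟨h1, h2, h3, _⟩ := seq_spec κ B hB hα hd
  have hle : ∀ β < α, (seq κ B hB β).1 ≤ (seq κ B hB α).1 := fun β hβ =>
    le_trans (le_trans (Ordinal.le_bsup _ β hβ) (le_max_right _ _)) h1
  refine ⟨h2, lt_of_lt_of_le hone (le_trans (le_max_left _ _) h1), hle, ?_⟩
  intro β hβ γ hγ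
  have hγd : γ < din κ B hB α :=
    lt_of_lt_of_le hγ (le_trans (Ordinal.le_bsup _ β hβ) (le_max_right _ _))
  rw [h3 γ hγd]
  have hex : ∃ b : Set.Iio α, γ < (seq κ B hB b.1).1 := ⟨⟨β, hβ⟩, hγ⟩
  unfold tau
  rw [dif_pos hex]
  have hβ' : hex.choose.1 < α := hex.choose.2
  have hγ' : γ < (seq κ B hB hex.choose.1).1 := hex.choose_spec
  rcases lt_trichotomy hex.choose.1 β with h | h | h
  · exact ((IH β hβ (hβ.trans hα)).2.2.2 hex.choose.1 h γ hγ').symm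
  · rw [h]
  · exact (IH hex.choose.1 hβ' (hβ'.trans hα)).2.2.2 β h γ hγ

lemma din_lt (κ : Cardinal.{0}) (B : Idx κ → Set (GenCantor κ))
    (hB : ∀ i, IsNwd κ (B i)) (hreg : κ.IsRegular) {α : Ordinal.{0}} (hα : α < κ.ord) :
    din κ B hB α < κ.ord := by
  apply max_lt
  · rw [Ordinal.add_one_eq_succ]
    exact (Cardinal.isSuccLimit_ord hreg.aleph0_le).succ_lt hα
  · exact Cardinal.bsup_lt_ord_of_isRegular hreg (Cardinal.lt_ord.mp hα)
      (fun i hi => (seq_good κ B hB hreg i (hi.trans hα)).1)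

lemma not_meager_univ (κ : Cardinal.{0}) (hreg : κ.IsRegular) :
    ¬ IsKMeager κ (Set.univ : Set (GenCantor κ)) := by
  rintro ⟨B, hB, hU⟩
  set x : GenCantor κ := fun β => (seq κ B hB (β.1 + 1)).2 β.1 with hxdef
  have hxmem : x ∈ ⋃ i, B i := by rw [← hU]; trivial
  obtain ⟨i, hi⟩ := Set.mem_iUnion.mp hxmem
  have hkey : x ∈ cyl κ (seq κ B hB i.1).1 (seq κ B hB i.1).2 := by
    intro β hβ
    have hβ1 : β.1 + 1 < κ.ord := by
      rw [Ordinal.add_one_eq_succ]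
      exact (Cardinal.isSuccLimit_ord hreg.aleph0_le).succ_lt β.2
    have hone : β.1 < β.1 + 1 := by
      rw [Ordinal.add_one_eq_succ]; exact Order.lt_succ_of_not_isMax (not_isMax β.1)
    have hgood := seq_good κ B hB hreg (β.1 + 1) hβ1
    have hlt : β.1 < (seq κ B hB (β.1 + 1)).1 := hone.trans hgood.2.1
    show (seq κ B hB (β.1 + 1)).2 β.1 = (seq κ B hB i.1).2 β.1
    rcases lt_trichotomy (β.1 + 1) i.1 with h | h | h
    · exact ((seq_good κ B hB hreg i.1 i.2).2.2.2 (β.1 + 1) h β.1 hlt).symm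
    · rw [h]
    · exact hgood.2.2.2 i.1 h β.1 hβ
  have h0 := (seq_spec κ B hB i.2 (din_lt κ B hB hreg i.2)).2.2.2
  have : x ∈ cyl κ (seq κ B hB i.1).1 (seq κ B hB i.1).2 ∩ B ⟨i.1, i.2⟩ := ⟨hkey, hi⟩
  rw [h0] at this
  exact this

lemma exists_mu (κ : Cardinal.{0}) (hpos : 0 < κ) (X : Set (GenCantor κ))
    (hX : #X < Cardinal.lift.{1} (sSup { c : Cardinal.{0} | ∃ μ < κ, c = 2 ^ μ })) :
    ∃ μ < κ, #X < Cardinal.lift.{1} (2 ^ μ) := by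
  by_contra h
  push_neg at h
  have hbdd : BddAbove { c : Cardinal.{0} | ∃ μ < κ, c = 2 ^ μ } := by
    refine ⟨2 ^ κ, ?_⟩
    rintro c ⟨μ, hμ, rfl⟩
    exact power_le_power_left two_ne_zero hμ.le
  rw [Cardinal.lift_sSup hbdd] at hX
  have hub : sSup (Cardinal.lift.{1} '' { c : Cardinal.{0} | ∃ μ < κ, c = 2 ^ μ }) ≤ #X := by
    apply csSup_le
    · exact ⟨Cardinal.lift.{1} (2 ^ (0 : Cardinal.{0})), ⟨2 ^ (0 : Cardinal.{0}), ⟨0, hpos, rfl⟩, rfl⟩⟩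
    · rintro c ⟨c', ⟨μ, hμ, rfl⟩, rfl⟩
      exact h μ hμ
  exact absurd hX (not_lt.mpr hub)

lemma small_nwd (κ : Cardinal.{0}) (hreg : κ.IsRegular) (X : Set (GenCantor κ))
    (μ : Cardinal.{0}) (hμ : μ < κ) (hX : #X < Cardinal.lift.{1} (2 ^ μ)) :
    IsNwd κ X := by
  intro δ hδ σ
  have hμo : μ.ord < κ.ord := Cardinal.ord_lt_ord.mpr hμ
  have hprin := Ordinal.isPrincipal_add_ord hreg.aleph0_le
  have hT : #(↥(Set.Iio μ.ord) → Bool) = Cardinal.lift.{1} (2 ^ μ) := by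
    rw [Cardinal.mk_arrow, Ordinal.mk_Iio_ordinal, Cardinal.card_ord]
    simp [Cardinal.lift_power, Cardinal.lift_two, Cardinal.mk_bool]
  set f : ↥X → (↥(Set.Iio μ.ord) → Bool) :=
    fun x j => x.1 ⟨δ + j.1, hprin hδ (j.2.trans hμo)⟩ with hfdef
  have hne : ∃ g, g ∉ Set.range f := by
    by_contra hg
    push_neg at hg
    have hsurj : Function.Surjective f := fun g => hg g
    have := Cardinal.mk_le_of_surjective hsurj
    rw [hT] at this
    exact absurd hX (not_lt.mpr this)
  obtain ⟨g, hg⟩ := hne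
  classical
  refine ⟨δ + μ.ord, le_self_add (a := δ) (b := μ.ord), hprin hδ hμo,
    (fun β => if β < δ then σ β else if h2 : β - δ < μ.ord then g ⟨β - δ, h2⟩ else false),
    ?_, ?_⟩
  · intro β hβ; simp only [if_pos hβ]
  · ext y
    simp only [Set.mem_inter_iff, Set.mem_empty_iff_false, iff_false, not_and]
    intro hy hyX
    apply hg
    refine ⟨⟨y, hyX⟩, ?_⟩
    funext j
    have hj : δ + j.1 < δ + μ.ord := (add_lt_add_iff_left δ).2 j.2
    have heq := hy ⟨δ + j.1, hprin hδ (j.2.trans hμo)⟩ hj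
    show y ⟨δ + j.1, _⟩ = g j
    rw [heq]
    simp only []
    have h1 : ¬ (δ + j.1 < δ) := not_lt.mpr (le_self_add (a := δ) (b := j.1))
    rw [if_neg h1]
    have h2 : δ + j.1 - δ = j.1 := Ordinal.add_sub_cancel δ j.1
    rw [dif_pos (show δ + j.1 - δ < μ.ord by rw [h2]; exact j.2)]
    exact congrArg g (Subtype.ext h2)

theorem small_sets_meager (κ : Cardinal.{0})
    (hreg : κ.IsRegular) (hunc : Cardinal.aleph0 < κ) :
    (∀ X : Set (GenCantor κ),
      #X < Cardinal.lift.{1} (sSup { c : Cardinal.{0} | ∃ μ < κ, c = 2 ^ μ }) →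
      IsKMeager κ X) ∧
    Cardinal.lift.{1} (sSup { c : Cardinal.{0} | ∃ μ < κ, c = 2 ^ μ }) ≤ nonM κ := by
  have hpos : (0 : Cardinal.{0}) < κ := aleph0_pos.trans_le hreg.aleph0_le
  have hpos0 : (0 : Ordinal.{0}) < κ.ord := by
    rw [Cardinal.lt_ord]; simpa using hpos
  have main : ∀ X : Set (GenCantor κ),
      #X < Cardinal.lift.{1} (sSup { c : Cardinal.{0} | ∃ μ < κ, c = 2 ^ μ }) →
      IsKMeager κ X := by
    intro X hX
    obtain ⟨μ, hμ, hXμ⟩ := exists_mu κ hpos X hX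
    refine ⟨fun _ => X, fun _ => small_nwd κ hreg X μ hμ hXμ, ?_⟩
    haveI : Nonempty (Idx κ) := ⟨⟨0, hpos0⟩⟩
    exact (Set.iUnion_const X).symm
  refine ⟨main, ?_⟩
  apply le_csInf
  · exact ⟨#(Set.univ : Set (GenCantor κ)), Set.univ, not_meager_univ κ hreg, rfl⟩
  · rintro c ⟨X, hX, rfl⟩
    by_contra hc
    push_neg at hc
    exact hX (main X hc)

end GenCichon
end

section
/- Let κ be an uncountable regular cardinal and let (x, I) and (y, J) be κ-chopped functions. Then Match(x, I) ⊆ Match(y, J) if and only if for all but fewer than κ many intervals I_α of I there exists an interval J_β of J such that J_β ⊆ I_α and x↾J_β = y↾J_β. -/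
namespace GenCichon

open Cardinal Set Ordinal

section Aux

variable {κ : Cardinal.{0}}

lemma aux_pts_le (I : IntervalPartition κ) : ∀ α, α < κ.ord → α ≤ I.pts α := by
  intro α
  induction α using Ordinal.induction with
  | h α ih =>
    intro hα
    by_contra h
    push_neg at h
    have h1 : I.pts α ≤ I.pts (I.pts α) := ih _ h (I.lt_ord α hα)
    have h2 : I.pts (I.pts α) < I.pts α := I.strictMono _ _ h hα
    exact absurd (h1.trans_lt h2) (lt_irrefl _)

lemma aux_pts_mono (I : IntervalPartition κ) {α β : Ordinal} (h : α ≤ β)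
    (hβ : β < κ.ord) : I.pts α ≤ I.pts β := by
  rcases eq_or_lt_of_le h with rfl | h'
  · exact le_rfl
  · exact (I.strictMono _ _ h' hβ).le

lemma aux_unbdd_of_not_small (S : Set (Idx κ)) (hunc : Cardinal.aleph0 < κ)
    (h : ¬ #S < Cardinal.lift.{1} κ) :
    ∀ γ < κ.ord, ∃ α ∈ S, γ < α.1 := by
  have hlim : Order.IsSuccLimit κ.ord := Cardinal.isSuccLimit_ord hunc.le
  by_contra hc
  push_neg at hc
  obtain ⟨γ, hγ, hbd⟩ := hc
  apply h
  have hinj : Function.Injective (fun s : S => (⟨s.1.1, (hbd s.1 s.2).trans_lt (lt_add_one γ)⟩ :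
      Set.Iio (γ + 1))) := by
    intro a b hab
    apply Subtype.ext
    apply Subtype.ext
    simpa using congrArg Subtype.val hab
  have h1 : #S ≤ #(Set.Iio (γ + 1) : Set Ordinal) := Cardinal.mk_le_of_injective hinj
  have h2 : #(Set.Iio (γ + 1) : Set Ordinal) = Cardinal.lift.{1} (γ + 1).card :=
    Ordinal.mk_Iio_ordinal (γ + 1)
  have h3 : (γ + 1).card < κ := Cardinal.lt_ord.mp (by
    rw [Ordinal.add_one_eq_succ]; exact hlim.succ_lt hγ)
  calc #S ≤ Cardinal.lift.{1} (γ + 1).card := h1.trans_eq h2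
    _ < Cardinal.lift.{1} κ := Cardinal.lift_lt.mpr h3

lemma aux_bdd_of_small (hreg : κ.IsRegular) (S : Set (Idx κ))
    (h : #S < Cardinal.lift.{1} κ) :
    ∃ γ < κ.ord, ∀ α ∈ S, α.1 ≤ γ := by
  classical
  set e := Ordinal.ToType.mk (o := κ.ord) with he
  set ι := { t : κ.ord.ToType // e.symm t ∈ S } with hι
  have heq : Nonempty (S ≃ ι) := by
    refine ⟨⟨fun s => ⟨e s.1, by simp⟩, fun t => ⟨e.symm t.1, t.2⟩, ?_, ?_⟩⟩
    · intro s; simp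
    · intro t; simp
  have hcard : Cardinal.lift.{0} #S = Cardinal.lift.{1} #ι :=
    Cardinal.lift_mk_eq'.mpr heq
  rw [Cardinal.lift_id'] at hcard
  have hικ : #ι < κ := by
    rw [← Cardinal.lift_lt.{0,1}, ← hcard]
    exact h
  have hcof : #ι < κ.ord.cof := by rwa [hreg.cof_eq]
  have hlt : ∀ t : ι, ((e.symm t.1 : Set.Iio κ.ord) : Ordinal) < κ.ord :=
    fun t => (e.symm t.1).2
  have hsup : (⨆ t : ι, ((e.symm t.1 : Set.Iio κ.ord) : Ordinal)) < κ.ord :=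
    Ordinal.iSup_lt_ord hcof hlt
  refine ⟨_, hsup, ?_⟩
  intro α hα
  have : α = e.symm (e α) := by simp
  calc α.1 = ((e.symm (e α) : Set.Iio κ.ord) : Ordinal) := by rw [← this]
    _ ≤ _ := Ordinal.le_iSup (fun t : ι => ((e.symm t.1 : Set.Iio κ.ord) : Ordinal))
        (⟨e α, by simpa using hα⟩ : ι)

lemma aux_mod_two (o : Ordinal) : o % 2 = 0 ∨ o % 2 = 1 := by
  have h : o % 2 < 2 := Ordinal.mod_lt o two_ne_zero
  have h' : o % 2 < Order.succ 1 := by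
    rw [← Ordinal.add_one_eq_succ, one_add_one_eq_two]; exact h
  have h1 : o % 2 ≤ 1 := Order.lt_succ_iff.mp h'
  exact Ordinal.le_one_iff.mp h1

lemma aux_succ_mod_two_zero {o : Ordinal} (h : o % 2 = 0) : (o + 1) % 2 = 1 := by
  have hd := Ordinal.div_add_mod o 2
  rw [h, add_zero] at hd
  rw [← hd, Ordinal.mul_add_mod_self]
  exact Ordinal.mod_eq_of_lt one_lt_two

lemma aux_succ_mod_two_one {o : Ordinal} (h : o % 2 = 1) : (o + 1) % 2 = 0 := by
  have hd := Ordinal.div_add_mod o 2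
  rw [h] at hd
  rw [← hd, add_assoc, one_add_one_eq_two, ← mul_add_one, Ordinal.mul_mod]

/-- Given a cofinal "sparse" family of bad intervals of `I`, construct an element
matching `(x, I)` but not `(y, J)`. -/
lemma aux_exists_nonmatch (κ : Cardinal.{0}) (hunc : Cardinal.aleph0 < κ)
    (x y : GenCantor κ) (I J : IntervalPartition κ) (B : Set (Idx κ))
    (hbad : ∀ α ∈ B, ¬ ∃ β : Idx κ, SubIntv κ J β.1 I α.1 ∧
      ∀ γ : Idx κ, J.pts β.1 ≤ γ.1 → γ.1 < J.pts (β.1 + 1) → x γ = y γ)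
    (hcof : ∀ γ < κ.ord, ∃ α ∈ B, γ < α.1)
    (hsparse : ∀ α ∈ B, ∀ α' ∈ B, α.1 < α'.1 → α.1 + 1 < α'.1) :
    ∃ z : GenCantor κ, Matches κ z x I ∧ ¬ Matches κ z y J := by
  classical
  have hlim : Order.IsSuccLimit κ.ord := Cardinal.isSuccLimit_ord hunc.le
  have hsucc : ∀ {o : Ordinal}, o < κ.ord → o + 1 < κ.ord := fun {o} h => by
    rw [Ordinal.add_one_eq_succ]; exact hlim.succ_lt h
  set z : GenCantor κ := fun p =>
    if ∃ α ∈ B, I.pts α.1 ≤ p.1 ∧ p.1 < I.pts (α.1 + 1) then x p else !(y p) with hz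
  have hz1 : ∀ p : Idx κ, ∀ α ∈ B, I.pts α.1 ≤ p.1 → p.1 < I.pts (α.1 + 1) →
      z p = x p := by
    intro p α hα h1 h2
    simp only [hz]
    rw [if_pos ⟨α, hα, h1, h2⟩]
  have hz2 : ∀ p : Idx κ, (¬ ∃ α ∈ B, I.pts α.1 ≤ p.1 ∧ p.1 < I.pts (α.1 + 1)) →
      z p = !(y p) := by
    intro p hp
    simp only [hz]
    rw [if_neg hp]
  refine ⟨z, ?_, ?_⟩
  · -- z matches (x, I)
    intro γ hγ
    obtain ⟨α, hαB, hγα⟩ := hcof γ hγ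
    exact ⟨α.1, hγα.le, α.2, fun β h1 h2 => hz1 β α hαB h1 h2⟩
  · -- z does not match (y, J)
    intro hm
    obtain ⟨β, -, hβ, hagree⟩ := hm 0 hlim.pos
    have hβ1 : β + 1 < κ.ord := hsucc hβ
    have hp0 : J.pts β < J.pts (β + 1) := J.strictMono β (β + 1) (lt_add_one β) hβ1
    have hp0κ : J.pts β < κ.ord := J.lt_ord β hβ
    -- every point of J_β lies in some chosen interval
    have hin : ∀ p : Idx κ, J.pts β ≤ p.1 → p.1 < J.pts (β + 1) →
        ∃ α ∈ B, I.pts α.1 ≤ p.1 ∧ p.1 < I.pts (α.1 + 1) := by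
      intro p h1 h2
      by_contra hc
      have e1 : z p = !(y p) := hz2 p hc
      have e2 : z p = y p := hagree p h1 h2
      rw [e2] at e1
      simp at e1
    obtain ⟨α₀, hα₀B, hle0, hlt0⟩ := hin ⟨J.pts β, hp0κ⟩ le_rfl hp0
    have hα₀1 : α₀.1 + 1 < κ.ord := hsucc α₀.2
    -- J_β ⊆ I_{α₀}
    have hJsub : J.pts (β + 1) ≤ I.pts (α₀.1 + 1) := by
      by_contra hc
      push_neg at hc
      have hqκ : I.pts (α₀.1 + 1) < κ.ord := I.lt_ord _ hα₀1
      obtain ⟨α₁, hα₁B, hle1, hlt1⟩ := hin ⟨I.pts (α₀.1 + 1), hqκ⟩ hlt0.le hc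
      have h01 : α₀.1 < α₁.1 := by
        by_contra hc'
        push_neg at hc'
        have : I.pts (α₁.1 + 1) ≤ I.pts (α₀.1 + 1) :=
          aux_pts_mono I (add_le_add_left hc' 1) hα₀1
        exact absurd (hlt1.trans_le this) (lt_irrefl _)
      have h10 : α₁.1 ≤ α₀.1 + 1 := by
        by_contra hc'
        push_neg at hc'
        exact absurd ((I.strictMono _ _ hc' α₁.2).trans_le hle1) (lt_irrefl _)
      have hsp := hsparse α₀ hα₀B α₁ hα₁B h01
      exact absurd (hsp.trans_le h10) (lt_irrefl _)
    -- α₀ is not bad after all: contradiction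
    refine hbad α₀ hα₀B ⟨⟨β, hβ⟩, ⟨hle0, hJsub⟩, ?_⟩
    intro γ h1 h2
    have hγ1 : I.pts α₀.1 ≤ γ.1 := hle0.trans h1
    have hγ2 : γ.1 < I.pts (α₀.1 + 1) := h2.trans_le hJsub
    have e1 : z γ = x γ := hz1 γ α₀ hα₀B hγ1 hγ2
    have e2 : z γ = y γ := hagree γ h1 h2
    rw [← e1, e2]

end Aux

theorem matchSet_subset_iff (κ : Cardinal.{0})
    (hreg : κ.IsRegular) (hunc : Cardinal.aleph0 < κ)
    (x y : GenCantor κ) (I J : IntervalPartition κ) :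
    MatchSet κ x I ⊆ MatchSet κ y J ↔
      #{ α : Idx κ | ¬ ∃ β : Idx κ, SubIntv κ J β.1 I α.1 ∧
          ∀ γ : Idx κ, J.pts β.1 ≤ γ.1 → γ.1 < J.pts (β.1 + 1) → x γ = y γ }
        < Cardinal.lift.{1} κ := by
  have hlim : Order.IsSuccLimit κ.ord := Cardinal.isSuccLimit_ord hunc.le
  have hsucc : ∀ {o : Ordinal}, o < κ.ord → o + 1 < κ.ord := fun {o} h => by
    rw [Ordinal.add_one_eq_succ]; exact hlim.succ_lt h
  set Bad : Set (Idx κ) := { α : Idx κ | ¬ ∃ β : Idx κ, SubIntv κ J β.1 I α.1 ∧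
      ∀ γ : Idx κ, J.pts β.1 ≤ γ.1 → γ.1 < J.pts (β.1 + 1) → x γ = y γ } with hBadDef
  constructor
  · -- forward direction, by contraposition
    intro hsub
    by_contra hbig
    have hub : ∀ γ < κ.ord, ∃ α ∈ Bad, γ < α.1 :=
      aux_unbdd_of_not_small Bad hunc hbig
    -- split Bad by parity; one of the two parts is cofinal
    set B0 : Set (Idx κ) := { α ∈ Bad | α.1 % 2 = 0 } with hB0
    set B1 : Set (Idx κ) := { α ∈ Bad | α.1 % 2 = 1 } with hB1
    have hcof : (∀ γ < κ.ord, ∃ α ∈ B0, γ < α.1) ∨ (∀ γ < κ.ord, ∃ α ∈ B1, γ < α.1) := by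
      by_contra hc
      push_neg at hc
      obtain ⟨⟨γ0, hγ0, hb0⟩, ⟨γ1, hγ1, hb1⟩⟩ := hc
      obtain ⟨α, hαB, hα⟩ := hub (max γ0 γ1) (max_lt hγ0 hγ1)
      rcases aux_mod_two α.1 with hm | hm
      · exact absurd hα (not_lt.mpr ((hb0 α ⟨hαB, hm⟩).trans (le_max_left γ0 γ1)))
      · exact absurd hα (not_lt.mpr ((hb1 α ⟨hαB, hm⟩).trans (le_max_right γ0 γ1)))
    -- in either case we get a cofinal sparse bad family
    have key : ∃ z : GenCantor κ, Matches κ z x I ∧ ¬ Matches κ z y J := by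
      rcases hcof with h | h
      · refine aux_exists_nonmatch κ hunc x y I J B0 (fun α hα => hα.1) h ?_
        intro α hα α' hα' hlt
        rcases lt_or_eq_of_le (show α.1 + 1 ≤ α'.1 by rw [Ordinal.add_one_eq_succ]; exact Order.succ_le_iff.mpr hlt) with h' | h'
        · exact h'
        · exfalso
          have := aux_succ_mod_two_zero hα.2
          rw [h', hα'.2] at this
          exact one_ne_zero this.symm
      · refine aux_exists_nonmatch κ hunc x y I J B1 (fun α hα => hα.1) h ?_
        intro α hα α' hα' hlt
        rcases lt_or_eq_of_le (show α.1 + 1 ≤ α'.1 by rw [Ordinal.add_one_eq_succ]; exact Order.succ_le_iff.mpr hlt) with h' | h'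
        · exact h'
        · exfalso
          have := aux_succ_mod_two_one hα.2
          rw [h', hα'.2] at this
          exact one_ne_zero this
    obtain ⟨z, hz1, hz2⟩ := key
    exact hz2 (hsub hz1)
  · -- backward direction
    intro hsmall z hz
    obtain ⟨γ₀, hγ₀, hbd⟩ := aux_bdd_of_small hreg Bad hsmall
    intro γ hγ
    have hJγ : J.pts γ < κ.ord := J.lt_ord γ hγ
    set δ : Ordinal := max (γ₀ + 1) (J.pts γ + 1) with hδdef
    have hδ : δ < κ.ord := max_lt (hsucc hγ₀) (hsucc hJγ)
    obtain ⟨α, hδα, hακ, hagr⟩ := hz δ hδ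
    have hgood : (⟨α, hακ⟩ : Idx κ) ∉ Bad := by
      intro hc
      have h1 : α ≤ γ₀ := hbd _ hc
      have h2 : γ₀ + 1 ≤ α := (le_max_left _ _).trans hδα
      exact absurd ((lt_add_one γ₀).trans_le h2) (not_lt.mpr h1)
    rw [hBadDef] at hgood
    simp only [Set.mem_setOf_eq, not_not] at hgood
    obtain ⟨β, ⟨hIJ1, hIJ2⟩, hxy⟩ := hgood
    refine ⟨β.1, ?_, β.2, ?_⟩
    · -- γ ≤ β
      have h1 : J.pts γ < J.pts β.1 := by
        have : J.pts γ + 1 ≤ α := (le_max_right _ _).trans hδα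
        have h2 : α ≤ I.pts α := aux_pts_le I α hακ
        exact lt_of_lt_of_le (lt_of_lt_of_le (lt_add_one _) this)
          (h2.trans hIJ1)
      by_contra hc
      push_neg at hc
      exact absurd (h1.trans_le (aux_pts_mono J hc.le hγ)) (lt_irrefl _)
    · intro p h1 h2
      have e1 : z p = x p := hagr p (hIJ1.trans h1) (h2.trans_le hIJ2)
      rw [e1]
      exact hxy p h1 h2

end GenCichon
end
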